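/- arXiv:2410.06701 — 2 statements merged into one kernel-verified Lean document; each statement's English description precedes it below -/
import Mathlib

section
/- Let H ∈ C¹([0,∞)) be nonnegative with H(η) = 0 for η large, and define φ(ξ) = 4π∫₀^∞ √(ξ²+u²) H(u²) u² du and ψ(ξ) = (4π/3)∫₀^∞ (u²/√(ξ²+u²)) H(u²) u² du. Let σ be a solution on an interval [0,T) of σ' = 4π(ρ+p), where γ(t) := exp(−∫₀^t σ(τ) dτ), ρ(t) := γ(t)^{−4} φ(γ(t)), p(t) := γ(t)^{−4} ψ(γ(t)), with initial condition σ(0) = √((8π/3) ρ(0)). Then σ(t)² = (8π/3) ρ(t) for all t ∈ [0,T). -/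
noncomputable section

open Real MeasureTheory Set Filter

/-- Physical space / momentum space ℝ³. -/
abbrev E3 := EuclideanSpace ℝ (Fin 3)

namespace EV

/-- ⟨v⟩ = √(1+|v|²). -/
def vb (v : E3) : ℝ := Real.sqrt (1 + ‖v‖ ^ 2)

/-- A fixed unit vector in ℝ³. -/
def e1 : E3 := EuclideanSpace.single (0 : Fin 3) (1 : ℝ)

/-- Spherical symmetry of a phase-space density: invariance under SO(3). -/
def SphSymm (g : E3 → E3 → ℝ) : Prop :=
  ∀ R : E3 ≃ₗᵢ[ℝ] E3, LinearEquiv.det R.toLinearEquiv = 1 →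
    ∀ x v : E3, g (R x) (R v) = g x v

/-- Mass-energy density ρ(t,r) = ∫ ⟨v⟩ f(t,x,v) dv, |x| = r. -/
def rho (f : ℝ → E3 → E3 → ℝ) (t r : ℝ) : ℝ :=
  ∫ v : E3, vb v * f t (r • e1) v

/-- Mass-current j(t,r) = ∫ (x·v/r) f(t,x,v) dv, |x| = r. -/
def jmom (f : ℝ → E3 → E3 → ℝ) (t r : ℝ) : ℝ :=
  ∫ v : E3, ((inner ℝ (r • e1) v : ℝ) / r) * f t (r • e1) v

/-- Radial pressure p(t,r) = ∫ (x·v/r)² f(t,x,v) dv/⟨v⟩, |x| = r. -/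
def prad (f : ℝ → E3 → E3 → ℝ) (t r : ℝ) : ℝ :=
  ∫ v : E3, ((inner ℝ (r • e1) v : ℝ) / r) ^ 2 / vb v * f t (r • e1) v

/-- Tangential pressure p_T(t,r) = (1/2)∫ |x×v/r|² f(t,x,v) dv/⟨v⟩, |x| = r,
using |x×v|² = |x|²|v|² - (x·v)². -/
def pT (f : ℝ → E3 → E3 → ℝ) (t r : ℝ) : ℝ :=
  (1 / 2) * ∫ v : E3,
    ((r ^ 2 * ‖v‖ ^ 2 - (inner ℝ (r • e1) v : ℝ) ^ 2) / r ^ 2) / vb v * f t (r • e1) v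

/-- A(t,r) = 1 - (8π/r)∫₀^r (ρ - aβj)(t,s) s² ds. -/
def Afield (f : ℝ → E3 → E3 → ℝ) (a β : ℝ → ℝ → ℝ) (t r : ℝ) : ℝ :=
  1 - (8 * π / r) * ∫ s in (0:ℝ)..r, (rho f t s - a t s * β t s * jmom f t s) * s ^ 2

/-- Radial derivative (one-sided at r = 0). -/
def dr (g : ℝ → ℝ → ℝ) (t r : ℝ) : ℝ := derivWithin (g t) (Ici 0) r

/-- Second radial derivative. -/
def dr2 (g : ℝ → ℝ → ℝ) (t r : ℝ) : ℝ := derivWithin (fun s => dr g t s) (Ici 0) r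

/-- Time derivative within the time interval I. -/
def dt (I : Set ℝ) (g : ℝ → ℝ → ℝ) (t r : ℝ) : ℝ := derivWithin (fun τ => g τ r) I t

/-- Spatial part of the Vlasov characteristic field:
v/(a⟨v⟩) − β x/r. -/
def F1 (a β : ℝ → ℝ → ℝ) (t : ℝ) (x v : E3) : E3 :=
  (1 / (a t ‖x‖ * vb v)) • v - (β t ‖x‖ / ‖x‖) • x

/-- Momentum part of the Vlasov characteristic field:
4πr a j (x·v/r)(x/r) + (∂_rβ − β/r)(x·v/r)(x/r) + (β/r)v. -/
def F2 (a β jf : ℝ → ℝ → ℝ) (t : ℝ) (x v : E3) : E3 :=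
  (((4 * π * ‖x‖ * a t ‖x‖ * jf t ‖x‖ + dr β t ‖x‖ - β t ‖x‖ / ‖x‖) *
      ((inner ℝ x v : ℝ) / ‖x‖)) / ‖x‖) • x
  + (β t ‖x‖ / ‖x‖) • v

/-- The Vlasov equation with fields a, β and current jf, on the time interval I. -/
def VlasovOn (I : Set ℝ) (a β jf : ℝ → ℝ → ℝ) (f : ℝ → E3 → E3 → ℝ) : Prop :=
  ∀ t ∈ I, ∀ x v : E3, x ≠ 0 →
    derivWithin (fun τ => f τ x v) I t
      + fderiv ℝ (fun y => f t y v) x (F1 a β t x v)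
      + fderiv ℝ (fun w => f t x w) v (F2 a β jf t x v) = 0

/-- Regularity of the metric coefficient a. -/
structure RegA (I : Set ℝ) (a : ℝ → ℝ → ℝ) : Prop where
  c1 : ContDiffOn ℝ 1 (fun p : ℝ × ℝ => a p.1 p.2) (I ×ˢ Ici 0)
  pos : ∀ t ∈ I, ∀ r : ℝ, 0 ≤ r → 0 < a t r
  bc0 : ∀ t ∈ I, a t 0 = 1
  bc1 : ∀ t ∈ I, dr a t 0 = 0

/-- Regularity of the metric coefficient β. -/
structure RegBeta (I : Set ℝ) (β : ℝ → ℝ → ℝ) : Prop where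
  c1 : ContDiffOn ℝ 1 (fun p : ℝ × ℝ => β p.1 p.2) (I ×ˢ Ici 0)
  c1' : ContDiffOn ℝ 1 (fun p : ℝ × ℝ => dr β p.1 p.2) (I ×ˢ Ici 0)
  bc0 : ∀ t ∈ I, β t 0 = 0
  bc2 : ∀ t ∈ I, dr2 β t 0 = 0

/-- Regularity of a prescribed radial current. -/
structure RegJ (I : Set ℝ) (jf : ℝ → ℝ → ℝ) : Prop where
  c1 : ContDiffOn ℝ 1 (fun p : ℝ × ℝ => jf p.1 p.2) (I ×ˢ Ici 0)
  bc0 : ∀ t ∈ I, jf t 0 = 0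
  supp : ∀ J ⊆ I, IsCompact J → ∃ R : ℝ, ∀ t ∈ J, ∀ r : ℝ, R ≤ r → jf t r = 0

/-- Regularity of the particle density f. -/
structure RegF (I : Set ℝ) (f : ℝ → E3 → E3 → ℝ) : Prop where
  c1 : ContDiffOn ℝ 1 (fun p : ℝ × E3 × E3 => f p.1 p.2.1 p.2.2) (I ×ˢ univ)
  symm : ∀ t ∈ I, SphSymm (f t)
  supp : ∀ J ⊆ I, IsCompact J → ∃ R : ℝ, ∀ t ∈ J, ∀ x v : E3,
    R ≤ ‖x‖ ∨ R ≤ ‖v‖ → f t x v = 0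

/-- Local boundedness of the fields: a⁻¹, raj, β, ∂_rβ bounded on J×[0,∞) for compact J ⊆ I. -/
def LocBounded (I : Set ℝ) (a β jf : ℝ → ℝ → ℝ) : Prop :=
  ∀ J ⊆ I, IsCompact J → ∃ C : ℝ, ∀ t ∈ J, ∀ r : ℝ, 0 ≤ r →
    1 / a t r ≤ C ∧ |r * a t r * jf t r| ≤ C ∧ |β t r| ≤ C ∧ |dr β t r| ≤ C

/-- Regular solution of the reduced spherically symmetric Einstein–Vlasov system in
Painlevé–Gullstrand coordinates on the time interval I. -/
structure IsRegSol (I : Set ℝ) (f : ℝ → E3 → E3 → ℝ) (a β : ℝ → ℝ → ℝ) : Prop where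
  f_nonneg : ∀ t ∈ I, ∀ x v : E3, 0 ≤ f t x v
  f_reg : RegF I f
  a_reg : RegA I a
  β_reg : RegBeta I β
  loc_bdd : LocBounded I a β (jmom f)
  vlasov : VlasovOn I a β (jmom f) f
  feq_β : ∀ t ∈ I, ∀ r : ℝ, 0 < r →
    dt I β t r - β t r * dr β t r
      = (1 - Afield f a β t r) / (2 * r) + 4 * π * r * prad f t r
  feq_a : ∀ t ∈ I, ∀ r : ℝ, 0 < r →
    dt I a t r - β t r * dr a t r = -(4 * π * r * (a t r) ^ 2 * jmom f t r)

/-- Admissible initial data for the reduced system. -/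
structure AdmData (f0 : E3 → E3 → ℝ) (a0 β0 : ℝ → ℝ) : Prop where
  f0_c1 : ContDiff ℝ 1 (fun p : E3 × E3 => f0 p.1 p.2)
  f0_cpt : HasCompactSupport (fun p : E3 × E3 => f0 p.1 p.2)
  f0_symm : SphSymm f0
  f0_nonneg : ∀ x v : E3, 0 ≤ f0 x v
  a0_c1 : ContDiffOn ℝ 1 a0 (Ici 0)
  a0_pos : ∀ r : ℝ, 0 ≤ r → 0 < a0 r
  a0_zero : a0 0 = 1
  a0_der : derivWithin a0 (Ici 0) 0 = 0
  a0_inf : Tendsto a0 atTop (nhds 1)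
  β0_c2 : ContDiffOn ℝ 2 β0 (Ici 0)
  β0_zero : β0 0 = 0
  β0_der2 : derivWithin (fun r => derivWithin β0 (Ici 0) r) (Ici 0) 0 = 0
  β0_inf : Tendsto β0 atTop (nhds 0)
  constraint : ∀ r : ℝ, 0 ≤ r →
    1 / (a0 r) ^ 2 - (β0 r) ^ 2
      = 1 - (8 * π / r) * ∫ s in (0:ℝ)..r,
          (rho (fun _ => f0) 0 s - a0 s * β0 s * jmom (fun _ => f0) 0 s) * s ^ 2

/-- The solution (f,a,β) is launched by the data (f0,a0,β0). -/
def Launches (f : ℝ → E3 → E3 → ℝ) (a β : ℝ → ℝ → ℝ)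
    (f0 : E3 → E3 → ℝ) (a0 β0 : ℝ → ℝ) : Prop :=
  (∀ x v : E3, f 0 x v = f0 x v) ∧ ∀ r : ℝ, 0 ≤ r → a 0 r = a0 r ∧ β 0 r = β0 r

/-- A characteristic curve of the Vlasov equation on the time interval I. -/
def IsChar (I : Set ℝ) (a β jf : ℝ → ℝ → ℝ) (x v : ℝ → E3) : Prop :=
  ∀ t ∈ I, HasDerivWithinAt x (F1 a β t (x t) (v t)) I t ∧
    HasDerivWithinAt v (F2 a β jf t (x t) (v t)) I t

/-- α_ε = (1 − ε^{1/5})/(6π). -/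
def alphaEps (ε : ℝ) : ℝ := (1 - ε ^ ((1:ℝ)/5)) / (6 * π)

/-- The dust quantity σ_D(t) = (2/3)/(1−t) = ∂_rβ_D(t). -/
def sigmaD (t : ℝ) : ℝ := (2/3) / (1 - t)

/-- The dust scale function γ_D(t) = (1−t)^{2/3}. -/
def gammaD (t : ℝ) : ℝ := (1 - t) ^ ((2:ℝ)/3)

/-- Hypotheses on the momentum profile H. -/
structure HProps (H : ℝ → ℝ) : Prop where
  c1 : ContDiffOn ℝ 1 H (Ici 0)
  nonneg : ∀ η : ℝ, 0 ≤ η → 0 ≤ H η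
  anti : AntitoneOn H (Ici 0)
  normalized : (∫ v : E3, H (‖v‖ ^ 2)) = 1
  vanish : ∀ η : ℝ, 1 ≤ η → H η = 0

/-- Hypotheses on the macroscopic profile ρ₀ of the Oppenheimer–Snyder-approximating data. -/
structure Rho0Props (ε : ℝ) (ρ₀ : ℝ → ℝ) : Prop where
  c1 : ContDiffOn ℝ 1 ρ₀ (Ici 0)
  nonneg : ∀ r : ℝ, 0 ≤ r → 0 ≤ ρ₀ r
  anti : AntitoneOn ρ₀ (Ici 0)
  core : ∀ r ∈ Icc (0:ℝ) 1, ρ₀ r = alphaEps ε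
  vanish : ∀ r : ℝ, 1 + ε ≤ r → ρ₀ r = 0

/-- The Oppenheimer–Snyder-approximating initial particle density
f̊(x,v) = ε^{−3/2} H(|v|²/ε) ρ₀(|x|). -/
def osF0 (ε : ℝ) (H ρ₀ : ℝ → ℝ) (x v : E3) : ℝ :=
  ε ^ (-(3:ℝ)/2) * H (‖v‖ ^ 2 / ε) * ρ₀ ‖x‖

/-- The mass-energy density ρ̊ induced by the Oppenheimer–Snyder-approximating data. -/
def osRho0 (ε : ℝ) (H ρ₀ : ℝ → ℝ) (s : ℝ) : ℝ := rho (fun _ => osF0 ε H ρ₀) 0 s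

/-- β̊(r) = ((8π/r)∫₀^r ρ̊(s) s² ds)^{1/2}. -/
def osBeta0 (ε : ℝ) (H ρ₀ : ℝ → ℝ) (r : ℝ) : ℝ :=
  Real.sqrt ((8 * π / r) * ∫ s in (0:ℝ)..r, osRho0 ε H ρ₀ s * s ^ 2)

/-- (f,a,β) is launched by the Oppenheimer–Snyder-approximating data. -/
def OSLaunch (ε : ℝ) (H ρ₀ : ℝ → ℝ) (f : ℝ → E3 → E3 → ℝ) (a β : ℝ → ℝ → ℝ) : Prop :=
  Launches f a β (osF0 ε H ρ₀) (fun _ => 1) (osBeta0 ε H ρ₀)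

/-- Bootstrap assumptions (i)–(iv) on [0,T). -/
def Bootstrap (T ε : ℝ) (H ρ₀ : ℝ → ℝ) (f : ℝ → E3 → E3 → ℝ) (a β : ℝ → ℝ → ℝ) : Prop :=
  (∀ t ∈ Ico (0:ℝ) T, ∀ r : ℝ, 0 ≤ r → dr β t r < sigmaD t) ∧
  (∀ t ∈ Ico (0:ℝ) T, ∀ r : ℝ, 0 ≤ r → -1 < β t r) ∧
  (∀ t ∈ Ico (0:ℝ) T, ∀ r : ℝ, 0 ≤ r → 1/2 < a t r ∧ a t r < 2) ∧
  (∀ x v : ℝ → E3, IsChar (Ico 0 T) a β (jmom f) x v →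
    osF0 ε H ρ₀ (x 0) (v 0) ≠ 0 →
    ∀ t ∈ Ico (0:ℝ) T, (1 - t) ^ ((2:ℝ)/3) * ‖v t‖ ≤ 2 * ‖v 0‖)

/-- φ_ε(ξ) = 4π α_ε ∫₀^∞ √(ξ²+εu²) H(u²) u² du. -/
def phiEps (ε : ℝ) (H : ℝ → ℝ) (ξ : ℝ) : ℝ :=
  4 * π * alphaEps ε * ∫ u in Ioi (0:ℝ), Real.sqrt (ξ ^ 2 + ε * u ^ 2) * H (u ^ 2) * u ^ 2

/-- ψ_ε(ξ) = (4π/3) α_ε ε ∫₀^∞ (u²/√(ξ²+εu²)) H(u²) u² du. -/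
def psiEps (ε : ℝ) (H : ℝ → ℝ) (ξ : ℝ) : ℝ :=
  (4 * π / 3) * alphaEps ε * ε *
    ∫ u in Ioi (0:ℝ), u ^ 2 / Real.sqrt (ξ ^ 2 + ε * u ^ 2) * H (u ^ 2) * u ^ 2

/-- (γ, γ') solves the homogeneous Vlasov scale-function ODE
γ'' = −(4π/3)(φ_ε(γ)+3ψ_ε(γ))/γ³, γ(0)=1, γ'(0) = −√((8π/3)φ_ε(1)) on I. -/
def GammaVSol (ε : ℝ) (H : ℝ → ℝ) (I : Set ℝ) (γ γ' : ℝ → ℝ) : Prop :=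
  (∀ t ∈ I, 0 < γ t) ∧
  (∀ t ∈ I, HasDerivWithinAt γ (γ' t) I t ∧
    HasDerivWithinAt γ'
      (-(4 * π / 3) * (phiEps ε H (γ t) + 3 * psiEps ε H (γ t)) / (γ t) ^ 3) I t) ∧
  γ 0 = 1 ∧ γ' 0 = -Real.sqrt ((8 * π / 3) * phiEps ε H 1)

/-- r*(t) = (1−3ε^{1/4})(1−t)^{2/3} + 3ε^{1/4}(1−t). -/
def rstar (ε t : ℝ) : ℝ :=
  (1 - 3 * ε ^ ((1:ℝ)/4)) * (1 - t) ^ ((2:ℝ)/3) + 3 * ε ^ ((1:ℝ)/4) * (1 - t)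

end EV

namespace EV

open Topology
lemma sqrt_sq_add_abs_sub (a b c : ℝ) (hc : 0 ≤ c) :
    |Real.sqrt (a ^ 2 + c) - Real.sqrt (b ^ 2 + c)| ≤ |a - b| := by
  have key : ∀ x y : ℝ, Real.sqrt (x ^ 2 + c) ≤ Real.sqrt (y ^ 2 + c) + |x - y| := by
    intro x y
    have hb : |y| ≤ Real.sqrt (y ^ 2 + c) := by
      rw [← Real.sqrt_sq_eq_abs]
      exact Real.sqrt_le_sqrt (by linarith)
    have h0 : (0:ℝ) ≤ Real.sqrt (y ^ 2 + c) + |x - y| := by positivity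
    rw [Real.sqrt_le_left h0]
    have hsq : Real.sqrt (y ^ 2 + c) ^ 2 = y ^ 2 + c := Real.sq_sqrt (by positivity)
    have h1 : 2 * y * (x - y) ≤ 2 * |y| * |x - y| := by
      calc 2 * y * (x - y) ≤ 2 * |y * (x - y)| := by
            rw [mul_assoc]; exact mul_le_mul_of_nonneg_left (le_abs_self _) (by norm_num)
        _ = 2 * |y| * |x - y| := by rw [abs_mul, mul_assoc]
    have h2 : 2 * |y| * |x - y| ≤ 2 * Real.sqrt (y ^ 2 + c) * |x - y| :=
      mul_le_mul_of_nonneg_right (by linarith) (abs_nonneg _)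
    nlinarith [sq_abs (x - y), sq_nonneg (x - y)]
  rw [abs_sub_le_iff]
  refine ⟨by linarith [key a b], ?_⟩
  have := key b a
  rw [abs_sub_comm] at this
  linarith

lemma integrableOn_Ioi_of_support (k : ℝ → ℝ) (hk : Continuous k) (R : ℝ)
    (hR : ∀ u : ℝ, R ≤ u → k u = 0) : IntegrableOn k (Ioi 0) := by
  have hcover : Ioi (0:ℝ) ⊆ Ioc 0 (max R 0) ∪ Ioi (max R 0) := by
    intro u hu
    rcases le_or_gt u (max R 0) with h | h
    · exact Or.inl ⟨hu, h⟩
    · exact Or.inr h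
  refine IntegrableOn.mono_set (IntegrableOn.union ?_ ?_) hcover
  · exact (hk.integrableOn_Icc).mono_set Ioc_subset_Icc_self
  · refine (integrableOn_zero (ε' := ℝ)).congr_fun ?_ measurableSet_Ioi
    intro u hu
    exact (hR u (le_of_lt (lt_of_le_of_lt (le_max_left R 0) hu))).symm

/-- propagation of the Hamiltonian constraint σ² = (8π/3)ρ by the
evolution equation σ' = 4π(ρ+p) for the homogeneous Vlasov scale system. -/
theorem homogeneous_constraint_propagation
    (T : ℝ) (hT : 0 < T) (H : ℝ → ℝ)
    (hHc1 : ContDiffOn ℝ 1 H (Ici 0))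
    (hHnn : ∀ η : ℝ, 0 ≤ η → 0 ≤ H η)
    (hHsupp : ∃ M : ℝ, ∀ η : ℝ, M ≤ η → H η = 0)
    (σ : ℝ → ℝ) :
    let φ : ℝ → ℝ := fun ξ =>
      4 * π * ∫ u in Ioi (0:ℝ), Real.sqrt (ξ ^ 2 + u ^ 2) * H (u ^ 2) * u ^ 2
    let ψ : ℝ → ℝ := fun ξ =>
      (4 * π / 3) * ∫ u in Ioi (0:ℝ), u ^ 2 / Real.sqrt (ξ ^ 2 + u ^ 2) * H (u ^ 2) * u ^ 2
    let γ : ℝ → ℝ := fun t => Real.exp (-(∫ τ in (0:ℝ)..t, σ τ))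
    let ρ : ℝ → ℝ := fun t => φ (γ t) / (γ t) ^ 4
    let p : ℝ → ℝ := fun t => ψ (γ t) / (γ t) ^ 4
    (∀ t ∈ Ico (0:ℝ) T, HasDerivWithinAt σ (4 * π * (ρ t + p t)) (Ico 0 T) t) →
    σ 0 = Real.sqrt ((8 * π / 3) * ρ 0) →
    ∀ t ∈ Ico (0:ℝ) T, (σ t) ^ 2 = (8 * π / 3) * ρ t := by
  intro φ ψ γ ρ p hσ hσ0
  obtain ⟨M, hM⟩ := hHsupp
  -- support of u ↦ H(u²)
  have hHR : ∀ u : ℝ, max M 1 ≤ u → H (u ^ 2) = 0 := by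
    intro u hu
    have h1 : (1:ℝ) ≤ u := le_trans (le_max_right _ _) hu
    have h2 : M ≤ u := le_trans (le_max_left _ _) hu
    exact hM _ (by nlinarith)
  have hHcont : Continuous fun u : ℝ => H (u ^ 2) :=
    hHc1.continuousOn.comp_continuous (continuous_pow 2) (fun u => sq_nonneg u)
  have hHnn' : ∀ u : ℝ, 0 ≤ H (u ^ 2) := fun u => hHnn _ (sq_nonneg u)
  -- positivity of sqrt factor
  have hsqp : ∀ ξ u : ℝ, 0 < ξ → 0 < Real.sqrt (ξ ^ 2 + u ^ 2) :=
    fun ξ u hξ => Real.sqrt_pos.mpr (by positivity)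
  -- integrabilities
  have hint1 : ∀ ξ : ℝ,
      IntegrableOn (fun u => Real.sqrt (ξ ^ 2 + u ^ 2) * H (u ^ 2) * u ^ 2) (Ioi 0) := by
    intro ξ
    refine integrableOn_Ioi_of_support _ ?_ (max M 1) (fun u hu => by rw [hHR u hu]; ring)
    exact (((continuous_const.add (continuous_pow 2)).sqrt.mul hHcont).mul (continuous_pow 2))
  have hbint : IntegrableOn (fun u : ℝ => H (u ^ 2) * u ^ 2) (Ioi 0) := by
    refine integrableOn_Ioi_of_support _ (hHcont.mul (continuous_pow 2)) (max M 1)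
      (fun u hu => by rw [hHR u hu]; ring)
  have hint3 : ∀ ξ : ℝ, 0 < ξ →
      IntegrableOn (fun u => u ^ 2 / Real.sqrt (ξ ^ 2 + u ^ 2) * H (u ^ 2) * u ^ 2) (Ioi 0) := by
    intro ξ hξ
    refine integrableOn_Ioi_of_support _ ?_ (max M 1)
      (fun u hu => by rw [hHR u hu]; ring)
    refine ((Continuous.div (continuous_pow 2)
      (continuous_const.add (continuous_pow 2)).sqrt
      (fun u => (hsqp ξ u hξ).ne')).mul hHcont).mul (continuous_pow 2)
  -- derivative of φ
  have hφ' : ∀ ξ : ℝ, 0 < ξ →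
      HasDerivAt φ
        (4 * π * ∫ u in Ioi (0:ℝ), ξ / Real.sqrt (ξ ^ 2 + u ^ 2) * (H (u ^ 2) * u ^ 2)) ξ := by
    intro ξ hξ
    have main := hasDerivAt_integral_of_dominated_loc_of_lip
      (μ := volume.restrict (Ioi (0:ℝ)))
      (F := fun x u => Real.sqrt (x ^ 2 + u ^ 2) * H (u ^ 2) * u ^ 2)
      (F' := fun u => ξ / Real.sqrt (ξ ^ 2 + u ^ 2) * (H (u ^ 2) * u ^ 2))
      (x₀ := ξ) (bound := fun u => H (u ^ 2) * u ^ 2) (s := Metric.ball ξ 1) (Metric.ball_mem_nhds ξ one_pos)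
      (Eventually.of_forall fun x =>
        ((((continuous_const.add (continuous_pow 2)).sqrt.mul hHcont).mul
          (continuous_pow 2)).aestronglyMeasurable))
      (hint1 ξ)
      (((Continuous.div continuous_const
          (continuous_const.add (continuous_pow 2)).sqrt
          (fun u => (hsqp ξ u hξ).ne')).mul
            (hHcont.mul (continuous_pow 2))).aestronglyMeasurable)
      (Eventually.of_forall fun u => ?_)
      hbint
      (Eventually.of_forall fun u => ?_)
    · exact main.2.const_mul _
    · -- Lipschitz
      refine LipschitzWith.lipschitzOnWith (LipschitzWith.of_dist_le_mul fun x y => ?_)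
      rw [Real.dist_eq, Real.dist_eq]
      have h1 : Real.sqrt (x ^ 2 + u ^ 2) * H (u ^ 2) * u ^ 2 -
          Real.sqrt (y ^ 2 + u ^ 2) * H (u ^ 2) * u ^ 2
          = (Real.sqrt (x ^ 2 + u ^ 2) - Real.sqrt (y ^ 2 + u ^ 2)) * (H (u ^ 2) * u ^ 2) := by
        ring
      rw [h1, abs_mul]
      have h2 := sqrt_sq_add_abs_sub x y (u ^ 2) (sq_nonneg u)
      have h3 : |H (u ^ 2) * u ^ 2| = H (u ^ 2) * u ^ 2 :=
        abs_of_nonneg (mul_nonneg (hHnn' u) (sq_nonneg u))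
      rw [Real.coe_nnabs, h3]
      calc |Real.sqrt (x ^ 2 + u ^ 2) - Real.sqrt (y ^ 2 + u ^ 2)| * (H (u ^ 2) * u ^ 2)
          ≤ |x - y| * (H (u ^ 2) * u ^ 2) :=
            mul_le_mul_of_nonneg_right h2 (mul_nonneg (hHnn' u) (sq_nonneg u))
        _ = H (u ^ 2) * u ^ 2 * |x - y| := by ring
    · -- pointwise derivative
      have h1 : HasDerivAt (fun x : ℝ => x ^ 2 + u ^ 2) (2 * ξ) ξ := by
        simpa using (hasDerivAt_pow 2 ξ).add_const (u ^ 2)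
      have h2 := h1.sqrt (by positivity)
      have h3 := (h2.mul_const (H (u ^ 2))).mul_const (u ^ 2)
      refine h3.congr_deriv ?_
      have hs := (hsqp ξ u hξ).ne'
      have hsq2 : Real.sqrt (ξ ^ 2 + u ^ 2) ^ 2 = ξ ^ 2 + u ^ 2 :=
        Real.sq_sqrt (by positivity)
      field_simp
  -- the key structural identity ξ φ'(ξ) = φ(ξ) - 3 ψ(ξ)
  have hφψ : ∀ ξ : ℝ, 0 < ξ →
      ξ * (4 * π * ∫ u in Ioi (0:ℝ), ξ / Real.sqrt (ξ ^ 2 + u ^ 2) * (H (u ^ 2) * u ^ 2))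
        = φ ξ - 3 * ψ ξ := by
    intro ξ hξ
    have hpt : (fun u : ℝ => ξ * (ξ / Real.sqrt (ξ ^ 2 + u ^ 2) * (H (u ^ 2) * u ^ 2)))
        = fun u => Real.sqrt (ξ ^ 2 + u ^ 2) * H (u ^ 2) * u ^ 2
            - u ^ 2 / Real.sqrt (ξ ^ 2 + u ^ 2) * H (u ^ 2) * u ^ 2 := by
      funext u
      have hs := (hsqp ξ u hξ).ne'
      have hsq2 : Real.sqrt (ξ ^ 2 + u ^ 2) ^ 2 = ξ ^ 2 + u ^ 2 :=
        Real.sq_sqrt (by positivity)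
      field_simp
      linear_combination (-(H (u ^ 2) * u ^ 2)) * hsq2
    calc ξ * (4 * π * ∫ u in Ioi (0:ℝ), ξ / Real.sqrt (ξ ^ 2 + u ^ 2) * (H (u ^ 2) * u ^ 2))
        = 4 * π * ∫ u in Ioi (0:ℝ),
            ξ * (ξ / Real.sqrt (ξ ^ 2 + u ^ 2) * (H (u ^ 2) * u ^ 2)) := by
          rw [MeasureTheory.integral_const_mul]; ring
      _ = 4 * π * ((∫ u in Ioi (0:ℝ), Real.sqrt (ξ ^ 2 + u ^ 2) * H (u ^ 2) * u ^ 2)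
            - ∫ u in Ioi (0:ℝ), u ^ 2 / Real.sqrt (ξ ^ 2 + u ^ 2) * H (u ^ 2) * u ^ 2) := by
          rw [hpt, integral_sub (hint1 ξ) (hint3 ξ hξ)]
      _ = φ ξ - 3 * ψ ξ := by
          show _ = 4 * π * (∫ u in Ioi (0:ℝ), Real.sqrt (ξ ^ 2 + u ^ 2) * H (u ^ 2) * u ^ 2)
            - 3 * ((4 * π / 3) *
              ∫ u in Ioi (0:ℝ), u ^ 2 / Real.sqrt (ξ ^ 2 + u ^ 2) * H (u ^ 2) * u ^ 2)
          ring
  -- basic facts about γ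
  have hγpos : ∀ s : ℝ, 0 < γ s := fun s => Real.exp_pos _
  have hσcont : ContinuousOn σ (Ico 0 T) := fun s hs => (hσ s hs).continuousWithinAt
  have hγ0 : γ 0 = 1 := by
    show Real.exp (-(∫ τ in (0:ℝ)..(0:ℝ), σ τ)) = 1
    rw [intervalIntegral.integral_same, neg_zero, Real.exp_zero]
  -- initial constraint
  have hρ0 : 0 ≤ ρ 0 := by
    show 0 ≤ φ (γ 0) / (γ 0) ^ 4
    rw [hγ0]
    have : 0 ≤ φ 1 := by
      have : 0 ≤ ∫ u in Ioi (0:ℝ), Real.sqrt (1 ^ 2 + u ^ 2) * H (u ^ 2) * u ^ 2 :=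
        setIntegral_nonneg measurableSet_Ioi fun u _ =>
          mul_nonneg (mul_nonneg (Real.sqrt_nonneg _) (hHnn' u)) (sq_nonneg u)
      have hπ : (0:ℝ) ≤ 4 * π := by positivity
      exact mul_nonneg hπ this
    simpa using this
  have hW0 : σ 0 ^ 2 = (8 * π / 3) * ρ 0 := by
    rw [hσ0]
    exact Real.sq_sqrt (by positivity)
  -- main argument on [0, t]
  intro t ht
  have htT : t < T := ht.2
  have ht0 : (0:ℝ) ≤ t := ht.1
  have hsub : Icc (0:ℝ) t ⊆ Ico 0 T := fun s hs => ⟨hs.1, lt_of_le_of_lt hs.2 htT⟩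
  -- membership fact : Ico 0 T ∈ 𝓝[Ici s] s for s ∈ Ico 0 T
  have hmem : ∀ s : ℝ, s ∈ Ico (0:ℝ) T → Ico (0:ℝ) T ∈ 𝓝[Ici s] s := by
    intro s hs
    refine mem_nhdsWithin.mpr ⟨Iio T, isOpen_Iio, hs.2, ?_⟩
    rintro x ⟨hx1, hx2⟩
    exact ⟨le_trans hs.1 hx2, hx1⟩
  -- derivative of γ within Ici s
  have hγd : ∀ s ∈ Ico (0:ℝ) t, HasDerivWithinAt γ (-σ s * γ s) (Ici s) s := by
    intro s hs
    have hsT : s ∈ Ico (0:ℝ) T := ⟨hs.1, lt_trans hs.2 htT⟩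
    have hii : IntervalIntegrable σ volume 0 s := by
      refine ContinuousOn.intervalIntegrable ?_
      have : uIcc (0:ℝ) s = Icc 0 s := uIcc_of_le hs.1
      rw [this]
      exact hσcont.mono fun x hx => ⟨hx.1, lt_of_le_of_lt hx.2 hsT.2⟩
    have hmeas : StronglyMeasurableAtFilter σ (𝓝[Ioi s] s) volume := by
      refine ⟨Ico s T, ?_, ?_⟩
      · refine mem_nhdsWithin.mpr ⟨Iio T, isOpen_Iio, hsT.2, ?_⟩
        rintro x ⟨hx1, hx2⟩
        exact ⟨le_of_lt hx2, hx1⟩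
      · exact ((hσcont.mono fun x hx => ⟨le_trans hsT.1 hx.1, hx.2⟩).aestronglyMeasurable
          measurableSet_Ico)
    have hcw : ContinuousWithinAt σ (Ioi s) s :=
      (((hσ s hsT).continuousWithinAt).mono_of_mem_nhdsWithin (hmem s hsT)).mono Ioi_subset_Ici_self
    have hGd : HasDerivWithinAt (fun r => ∫ τ in (0:ℝ)..r, σ τ) (σ s) (Ici s) s :=
      intervalIntegral.integral_hasDerivWithinAt_right hii hmeas hcw
    have := (hGd.neg).exp
    convert this using 1
    case e'_8 => rfl
    show -σ s * Real.exp (-(∫ τ in (0:ℝ)..s, σ τ)) = _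
    ring
    rfl
  -- derivative of ρ within Ici s
  have hρd : ∀ s ∈ Ico (0:ℝ) t,
      HasDerivWithinAt ρ (3 * σ s * (ρ s + p s)) (Ici s) s := by
    intro s hs
    set g : ℝ := γ s with hg
    have hgpos : 0 < g := hγpos s
    set D : ℝ := 4 * π * ∫ u in Ioi (0:ℝ),
      g / Real.sqrt (g ^ 2 + u ^ 2) * (H (u ^ 2) * u ^ 2) with hD
    have h1 : HasDerivWithinAt (fun r => φ (γ r)) (D * (-σ s * g)) (Ici s) s :=
      (HasDerivAt.comp_hasDerivWithinAt (h₂ := φ) (h := γ) s (hφ' g hgpos) (hγd s hs))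
    have h2 : HasDerivWithinAt (fun r => (γ r) ^ 4)
        ((4:ℕ) * g ^ 3 * (-σ s * g)) (Ici s) s := by
      simpa using (hγd s hs).fun_pow 4
    have h3 := h1.div h2 (by positivity)
    have hkey : g * D = φ g - 3 * ψ g := hφψ g hgpos
    have hDval : D = (φ g - 3 * ψ g) / g := by
      field_simp [hgpos.ne'] at hkey ⊢
      linarith [hkey]
    have : (D * (-σ s * g) * g ^ 4 - φ g * ((4:ℕ) * g ^ 3 * (-σ s * g))) / (g ^ 4) ^ 2
        = 3 * σ s * (ρ s + p s) := by
      show _ = 3 * σ s * (φ (γ s) / (γ s) ^ 4 + ψ (γ s) / (γ s) ^ 4)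
      rw [← hg, hDval]
      field_simp
      ring
    rw [← this]
    exact h3
  -- derivative of the constraint function W
  set W : ℝ → ℝ := fun s => σ s ^ 2 - (8 * π / 3) * ρ s with hWdef
  have hWd : ∀ s ∈ Ico (0:ℝ) t, HasDerivWithinAt W 0 (Ici s) s := by
    intro s hs
    have hsT : s ∈ Ico (0:ℝ) T := ⟨hs.1, lt_trans hs.2 htT⟩
    have hσ' : HasDerivWithinAt σ (4 * π * (ρ s + p s)) (Ici s) s :=
      (hσ s hsT).mono_of_mem_nhdsWithin (hmem s hsT)
    have hσ2 : HasDerivWithinAt (fun r => σ r ^ 2)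
        ((2:ℕ) * σ s ^ 1 * (4 * π * (ρ s + p s))) (Ici s) s := hσ'.pow 2
    have := hσ2.sub ((hρd s hs).const_mul (8 * π / 3))
    convert this using 1
    · rfl
    · rfl
    · rfl
    push_cast
    ring
  -- continuity of W on [0, t]
  have hσcontIcc : ContinuousOn σ (Icc 0 t) :=
    fun s hs => ((hσ s (hsub hs)).continuousWithinAt).mono hsub
  have hGc : ContinuousOn (fun r => ∫ τ in (0:ℝ)..r, σ τ) (Icc 0 t) := by
    have hI : IntegrableOn σ (uIcc 0 t) := by
      rw [uIcc_of_le ht0]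
      exact hσcontIcc.integrableOn_Icc
    have := intervalIntegral.continuousOn_primitive_interval hI
    rwa [uIcc_of_le ht0] at this
  have hγc : ContinuousOn γ (Icc 0 t) :=
    Real.continuous_exp.comp_continuousOn hGc.neg
  have hρc : ContinuousOn ρ (Icc 0 t) := by
    have hφγ : ContinuousOn (fun r => φ (γ r)) (Icc 0 t) := fun s hs =>
      ((hφ' (γ s) (hγpos s)).continuousAt).comp_continuousWithinAt (hγc s hs)
    exact hφγ.div (hγc.pow 4) (fun s _ => by positivity)
  have hWc : ContinuousOn W (Icc 0 t) :=
    (hσcontIcc.pow 2).sub (continuousOn_const.mul hρc)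
  -- conclude
  have hconst := constant_of_has_deriv_right_zero hWc hWd t ⟨ht0, le_refl t⟩
  have : W t = 0 := by
    rw [hconst]
    show σ 0 ^ 2 - (8 * π / 3) * ρ 0 = 0
    rw [hW0]; ring
  have : σ t ^ 2 - (8 * π / 3) * ρ t = 0 := this
  linarith


end EV
end
end

section
/- Let 0 < T < 1. Then for every sufficiently small ε > 0 the solution γ_{V,ε} exists on [0,T], and for all t ∈ (0,T]: (a) γ_{V,ε}(t) > γ_D(t), and (b) σ_{V,ε}(t) < σ_D(t), where γ_D(t) = (1−t)^{2/3}, σ_D(t) = −γ_D'(t)/γ_D(t) = (2/3)/(1−t), and σ_{V,ε} = −γ_{V,ε}'/γ_{V,ε}. -/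
noncomputable section

open Real MeasureTheory Set Filter

namespace EV
/-! ### Auxiliary lemmas -/

section AuxInt

variable {H : ℝ → ℝ} {ε : ℝ}

lemma HProps.contOn (hH : HProps H) : ContinuousOn H (Ici 0) := hH.c1.continuousOn

lemma H_sq_zero (hH : HProps H) {u : ℝ} (hu : 1 < u) : H (u ^ 2) = 0 :=
  hH.vanish _ (by nlinarith)

lemma integrableOn_kH (hH : HProps H) {k : ℝ → ℝ} (hk : ContinuousOn k (Icc 0 1)) :
    MeasureTheory.IntegrableOn (fun u => k u * H (u ^ 2) * u ^ 2) (Ioi (0:ℝ)) := by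
  rw [← Ioc_union_Ioi_eq_Ioi (zero_le_one' ℝ)]
  refine MeasureTheory.IntegrableOn.union ?_ ?_
  · refine (ContinuousOn.integrableOn_Icc ?_).mono_set Ioc_subset_Icc_self
    exact (hk.mul ((hH.contOn).comp (continuous_pow 2).continuousOn fun u _ => sq_nonneg u)).mul
      (continuous_pow 2).continuousOn
  · refine MeasureTheory.integrableOn_zero.congr_fun (fun u hu => ?_) measurableSet_Ioi
    simp [H_sq_zero hH (mem_Ioi.mp hu)]

lemma J_eq (hH : HProps H) :
    ∫ u in Ioi (0:ℝ), H (u ^ 2) * u ^ 2 = 1 / (4 * π) := by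
  have hγ : Real.Gamma ((Fintype.card (Fin 3) : ℝ) / 2 + 1) = 3 / 4 * Real.sqrt π := by
    have h32 : ((Fintype.card (Fin 3) : ℝ)) / 2 + 1 = 1/2 + 1 + 1 := by
      simp [Fintype.card_fin]; norm_num
    rw [h32, Real.Gamma_add_one (by norm_num), Real.Gamma_add_one (by norm_num),
      Real.Gamma_one_half_eq]
    ring
  have hvol : (volume (Metric.ball (0 : E3) 1)).toReal = 4 * π / 3 := by
    rw [EuclideanSpace.volume_ball, hγ, ENNReal.ofReal_one, one_pow, one_mul,
      ENNReal.toReal_ofReal (by positivity), Fintype.card_fin]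
    have h3 : Real.sqrt π ^ (3:ℕ) = π * Real.sqrt π := by
      rw [pow_succ, Real.sq_sqrt pi_pos.le]
    rw [h3, div_eq_iff (by positivity)]
    ring
  have key := MeasureTheory.integral_fun_norm_addHaar (volume : Measure E3)
      (fun y : ℝ => H (y ^ 2))
  have hL : (∫ x : E3, H (‖x‖ ^ 2)) = 1 := hH.normalized
  rw [hL, measureReal_def, hvol] at key
  simp only [finrank_euclideanSpace_fin, nsmul_eq_mul, smul_eq_mul, Nat.cast_ofNat] at key
  have hswap : (∫ y in Ioi (0:ℝ), y ^ (3 - 1) * H (y ^ 2))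
      = ∫ u in Ioi (0:ℝ), H (u ^ 2) * u ^ 2 := by
    refine MeasureTheory.integral_congr_ae (Filter.Eventually.of_forall fun y => ?_)
    norm_num [mul_comm]
  rw [hswap] at key
  have hπ := pi_pos
  field_simp at key ⊢
  linarith

end AuxInt

section AuxBounds

variable {H : ℝ → ℝ} {ε : ℝ}

lemma intCH (hH : HProps H) (c : ℝ) :
    ∫ u in Ioi (0:ℝ), c * H (u ^ 2) * u ^ 2 = c / (4 * π) := by
  simp_rw [mul_assoc]
  rw [MeasureTheory.integral_const_mul, J_eq hH, mul_one_div]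

lemma setInt_le (hH : HProps H) {f : ℝ → ℝ}
    (hf : MeasureTheory.IntegrableOn f (Ioi (0:ℝ))) {c : ℝ}
    (h : ∀ u : ℝ, 0 < u → f u ≤ c * H (u ^ 2) * u ^ 2) :
    ∫ u in Ioi (0:ℝ), f u ≤ c / (4 * π) := by
  rw [← intCH hH c]
  exact MeasureTheory.setIntegral_mono_on hf (integrableOn_kH hH continuousOn_const)
    measurableSet_Ioi (fun u hu => h u hu)

lemma setInt_abs_le (hH : HProps H) {f g : ℝ → ℝ}
    (hf : MeasureTheory.IntegrableOn f (Ioi (0:ℝ)))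
    (hg : MeasureTheory.IntegrableOn g (Ioi (0:ℝ))) {c : ℝ}
    (h : ∀ u : ℝ, 0 < u → |f u - g u| ≤ c * H (u ^ 2) * u ^ 2) :
    |(∫ u in Ioi (0:ℝ), f u) - ∫ u in Ioi (0:ℝ), g u| ≤ c / (4 * π) := by
  rw [← MeasureTheory.integral_sub hf hg, ← intCH hH c, ← Real.norm_eq_abs]
  refine MeasureTheory.norm_integral_le_of_norm_le (integrableOn_kH hH continuousOn_const) ?_
  refine (MeasureTheory.ae_restrict_iff' measurableSet_Ioi).mpr (Filter.Eventually.of_forall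
    fun u hu => ?_)
  simpa [Real.norm_eq_abs] using h u hu

lemma alphaEps_nonneg (hε0 : 0 ≤ ε) (hε1 : ε ≤ 1) : 0 ≤ alphaEps ε := by
  have h1 : ε ^ ((1:ℝ)/5) ≤ 1 := Real.rpow_le_one hε0 hε1 (by norm_num)
  have := pi_pos
  unfold alphaEps
  apply div_nonneg (by linarith) (by positivity)

lemma alphaEps_le (hε0 : 0 ≤ ε) : alphaEps ε ≤ 1 / (6 * π) := by
  have h1 : 0 ≤ ε ^ ((1:ℝ)/5) := Real.rpow_nonneg hε0 _
  have := pi_pos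
  unfold alphaEps
  gcongr
  linarith

lemma integrable_phi_int (hH : HProps H) (ξ : ℝ) :
    MeasureTheory.IntegrableOn
      (fun u => Real.sqrt (ξ ^ 2 + ε * u ^ 2) * H (u ^ 2) * u ^ 2) (Ioi (0:ℝ)) :=
  integrableOn_kH hH ((Real.continuous_sqrt.comp (by fun_prop)).continuousOn)

lemma integrable_psi_int (hH : HProps H) (hε0 : 0 ≤ ε) {ξ : ℝ} (hξ : 0 < ξ) :
    MeasureTheory.IntegrableOn
      (fun u => u ^ 2 / Real.sqrt (ξ ^ 2 + ε * u ^ 2) * H (u ^ 2) * u ^ 2) (Ioi (0:ℝ)) := by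
  refine integrableOn_kH hH (ContinuousOn.div (continuous_pow 2).continuousOn
    ((Real.continuous_sqrt.comp (by fun_prop)).continuousOn) fun u _ => ?_)
  have h1 : 0 < ξ ^ 2 + ε * u ^ 2 := by nlinarith [mul_nonneg hε0 (sq_nonneg u), pow_pos hξ 2]
  exact (Real.sqrt_pos.mpr h1).ne'

lemma phiEps_nonneg (hH : HProps H) (hε0 : 0 ≤ ε) (hε1 : ε ≤ 1) (ξ : ℝ) :
    0 ≤ phiEps ε H ξ := by
  have h1 : 0 ≤ ∫ u in Ioi (0:ℝ), Real.sqrt (ξ^2+ε*u^2) * H (u^2) * u^2 :=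
    MeasureTheory.setIntegral_nonneg measurableSet_Ioi fun u _ => by
      have h2 := hH.nonneg (u^2) (sq_nonneg u)
      have h3 := Real.sqrt_nonneg (ξ^2+ε*u^2)
      positivity
  have hα := alphaEps_nonneg hε0 hε1
  exact mul_nonneg (mul_nonneg (by positivity) hα) h1

lemma psiEps_nonneg (hH : HProps H) (hε0 : 0 ≤ ε) (hε1 : ε ≤ 1) (ξ : ℝ) :
    0 ≤ psiEps ε H ξ := by
  have h1 : 0 ≤ ∫ u in Ioi (0:ℝ), u^2 / Real.sqrt (ξ^2+ε*u^2) * H (u^2) * u^2 :=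
    MeasureTheory.setIntegral_nonneg measurableSet_Ioi fun u _ => by
      have h2 := hH.nonneg (u^2) (sq_nonneg u)
      have h3 := Real.sqrt_nonneg (ξ^2+ε*u^2)
      positivity
  have hα := alphaEps_nonneg hε0 hε1
  exact mul_nonneg (mul_nonneg (mul_nonneg (by positivity) hα) hε0) h1

lemma S_nonneg (hH : HProps H) (hε0 : 0 ≤ ε) (hε1 : ε ≤ 1) (ξ : ℝ) :
    0 ≤ phiEps ε H ξ + 3 * psiEps ε H ξ := by
  have := phiEps_nonneg hH hε0 hε1 ξ
  have := psiEps_nonneg hH hε0 hε1 ξ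
  linarith

lemma phiEps_le (hH : HProps H) (hε0 : 0 < ε) (hε1 : ε ≤ 1) {ξ : ℝ} (hξ : 0 ≤ ξ) :
    phiEps ε H ξ ≤ alphaEps ε * (ξ + Real.sqrt ε) := by
  have hα := alphaEps_nonneg hε0.le hε1
  have hεs : Real.sqrt ε ^ 2 = ε := Real.sq_sqrt hε0.le
  have hεs0 : 0 ≤ Real.sqrt ε := Real.sqrt_nonneg ε
  have hint : ∫ u in Ioi (0:ℝ), Real.sqrt (ξ^2+ε*u^2) * H (u^2) * u^2
      ≤ (ξ + Real.sqrt ε) / (4*π) := by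
    refine setInt_le hH (integrable_phi_int hH ξ) fun u hu => ?_
    rcases le_or_gt u 1 with h1 | h1
    · have hHnn := hH.nonneg (u^2) (sq_nonneg u)
      have hu2 : u^2 ≤ 1 := by nlinarith
      have hsq : Real.sqrt (ξ^2 + ε*u^2) ≤ ξ + Real.sqrt ε := by
        rw [show ξ + Real.sqrt ε = Real.sqrt ((ξ + Real.sqrt ε)^2) from
          (Real.sqrt_sq (by positivity)).symm]
        apply Real.sqrt_le_sqrt
        nlinarith [mul_nonneg hξ hεs0, mul_nonneg hε0.le (sub_nonneg.mpr hu2)]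
      exact mul_le_mul_of_nonneg_right (mul_le_mul_of_nonneg_right hsq hHnn) (sq_nonneg u)
    · simp [H_sq_zero hH h1]
  calc phiEps ε H ξ
      = 4*π*alphaEps ε * ∫ u in Ioi (0:ℝ), Real.sqrt (ξ^2+ε*u^2) * H (u^2) * u^2 := rfl
    _ ≤ 4*π*alphaEps ε * ((ξ + Real.sqrt ε)/(4*π)) :=
        mul_le_mul_of_nonneg_left hint (by positivity)
    _ = alphaEps ε * (ξ + Real.sqrt ε) := by field_simp

lemma psiEps_le (hH : HProps H) (hε0 : 0 < ε) (hε1 : ε ≤ 1) {ξ : ℝ} (hξ : 0 < ξ) :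
    psiEps ε H ξ ≤ alphaEps ε * Real.sqrt ε / 3 := by
  have hα := alphaEps_nonneg hε0.le hε1
  have hsε : 0 < Real.sqrt ε := Real.sqrt_pos.mpr hε0
  have hint : ∫ u in Ioi (0:ℝ), u^2 / Real.sqrt (ξ^2+ε*u^2) * H (u^2) * u^2
      ≤ (Real.sqrt ε)⁻¹ / (4*π) := by
    refine setInt_le hH (integrable_psi_int hH hε0.le hξ) fun u hu => ?_
    rcases le_or_gt u 1 with h1 | h1
    · have hHnn := hH.nonneg (u^2) (sq_nonneg u)
      have hk : u^2 / Real.sqrt (ξ^2+ε*u^2) ≤ (Real.sqrt ε)⁻¹ := by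
        have hden : Real.sqrt ε * u ≤ Real.sqrt (ξ^2+ε*u^2) := by
          rw [show Real.sqrt ε * u = Real.sqrt (ε * u^2) by
            rw [Real.sqrt_mul hε0.le, Real.sqrt_sq hu.le]]
          exact Real.sqrt_le_sqrt (by nlinarith [sq_nonneg ξ])
        have hden0 : 0 < Real.sqrt ε * u := by positivity
        calc u^2 / Real.sqrt (ξ^2+ε*u^2) ≤ u^2 / (Real.sqrt ε * u) :=
              div_le_div_of_nonneg_left (sq_nonneg u) hden0 hden
          _ = u / Real.sqrt ε := by field_simp [hu.ne']
          _ ≤ 1 / Real.sqrt ε := by gcongr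
          _ = (Real.sqrt ε)⁻¹ := one_div _
      exact mul_le_mul_of_nonneg_right (mul_le_mul_of_nonneg_right hk hHnn) (sq_nonneg u)
    · simp [H_sq_zero hH h1]
  have hεε : Real.sqrt ε * Real.sqrt ε = ε := Real.mul_self_sqrt hε0.le
  set a := alphaEps ε with ha
  calc psiEps ε H ξ
      = 4*π/3*a*ε * ∫ u in Ioi (0:ℝ), u^2 / Real.sqrt (ξ^2+ε*u^2) * H (u^2) * u^2 := rfl
    _ ≤ 4*π/3*a*ε * ((Real.sqrt ε)⁻¹/(4*π)) :=
        mul_le_mul_of_nonneg_left hint (by positivity)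
    _ = a * Real.sqrt ε / 3 := by
        field_simp
        linear_combination (-1 : ℝ) * a * hεε

lemma S_le (hH : HProps H) (hε0 : 0 < ε) (hε1 : ε ≤ 1) {ξ : ℝ} (hξ : 0 < ξ) :
    phiEps ε H ξ + 3 * psiEps ε H ξ ≤ alphaEps ε * (ξ + 2 * Real.sqrt ε) := by
  have h1 := phiEps_le hH hε0 hε1 hξ.le
  have h2 := psiEps_le hH hε0 hε1 hξ
  nlinarith

end AuxBounds

section AuxLip

variable {H : ℝ → ℝ} {ε : ℝ}

lemma sqrt_sq_add_diff {a b c : ℝ} (ha : 0 ≤ a) (hb : 0 ≤ b) (hc : 0 ≤ c) :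
    |Real.sqrt (a^2+c) - Real.sqrt (b^2+c)| ≤ |a - b| := by
  have key : ∀ x y : ℝ, 0 ≤ x → 0 ≤ y →
      Real.sqrt (x^2+c) - Real.sqrt (y^2+c) ≤ |x - y| := by
    intro x y hx hy
    have h1 : Real.sqrt (x^2+c) ≤ Real.sqrt ((y+|x-y|)^2+c) := by
      apply Real.sqrt_le_sqrt
      nlinarith [le_abs_self (x - y), abs_nonneg (x-y)]
    have hy' : y ≤ Real.sqrt (y^2+c) := by
      calc y = Real.sqrt (y^2) := (Real.sqrt_sq hy).symm
        _ ≤ Real.sqrt (y^2+c) := Real.sqrt_le_sqrt (by linarith)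
    have h2 : Real.sqrt ((y+|x-y|)^2+c) ≤ Real.sqrt (y^2+c) + |x-y| := by
      rw [show Real.sqrt (y^2+c) + |x-y|
          = Real.sqrt ((Real.sqrt (y^2+c) + |x-y|)^2) from
        (Real.sqrt_sq (by positivity)).symm]
      apply Real.sqrt_le_sqrt
      nlinarith [Real.sq_sqrt (by positivity : (0:ℝ) ≤ y^2+c), abs_nonneg (x-y),
        mul_nonneg (sub_nonneg.mpr hy') (abs_nonneg (x-y))]
    linarith
  rw [abs_sub_le_iff]
  exact ⟨key a b ha hb, by rw [abs_sub_comm]; exact key b a hb ha⟩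

lemma phiEps_lip (hH : HProps H) (hε0 : 0 < ε) (hε1 : ε ≤ 1) {a b : ℝ}
    (ha : 0 ≤ a) (hb : 0 ≤ b) :
    |phiEps ε H a - phiEps ε H b| ≤ alphaEps ε * |a - b| := by
  have hα := alphaEps_nonneg hε0.le hε1
  have habs : |(∫ u in Ioi (0:ℝ), Real.sqrt (a^2+ε*u^2) * H (u^2) * u^2)
      - ∫ u in Ioi (0:ℝ), Real.sqrt (b^2+ε*u^2) * H (u^2) * u^2| ≤ |a-b| / (4*π) := by
    refine setInt_abs_le hH (integrable_phi_int hH a) (integrable_phi_int hH b)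
      fun u hu => ?_
    have hHnn := hH.nonneg (u^2) (sq_nonneg u)
    have hd := sqrt_sq_add_diff ha hb (mul_nonneg hε0.le (sq_nonneg u))
    have heq : Real.sqrt (a^2+ε*u^2) * H (u^2) * u^2 - Real.sqrt (b^2+ε*u^2) * H (u^2) * u^2
        = (Real.sqrt (a^2+ε*u^2) - Real.sqrt (b^2+ε*u^2)) * (H (u^2) * u^2) := by ring
    rw [heq, abs_mul, abs_of_nonneg (mul_nonneg hHnn (sq_nonneg u))]
    calc |Real.sqrt (a^2+ε*u^2) - Real.sqrt (b^2+ε*u^2)| * (H (u^2) * u^2)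
        ≤ |a-b| * (H (u^2) * u^2) :=
          mul_le_mul_of_nonneg_right hd (mul_nonneg hHnn (sq_nonneg u))
      _ = |a-b| * H (u^2) * u^2 := (mul_assoc _ _ _).symm
  set Ia := ∫ u in Ioi (0:ℝ), Real.sqrt (a^2+ε*u^2) * H (u^2) * u^2 with hIa
  set Ib := ∫ u in Ioi (0:ℝ), Real.sqrt (b^2+ε*u^2) * H (u^2) * u^2 with hIb
  have hphi : phiEps ε H a - phiEps ε H b = 4*π*alphaEps ε * (Ia - Ib) := by
    unfold phiEps; rw [hIa, hIb]; ring
  rw [hphi, abs_mul, abs_of_nonneg (by positivity : (0:ℝ) ≤ 4*π*alphaEps ε)]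
  calc 4*π*alphaEps ε * |Ia - Ib| ≤ 4*π*alphaEps ε * (|a-b|/(4*π)) :=
        mul_le_mul_of_nonneg_left habs (by positivity)
    _ = alphaEps ε * |a-b| := by field_simp

lemma psiEps_lip (hH : HProps H) (hε0 : 0 < ε) (hε1 : ε ≤ 1) {a b : ℝ}
    (ha : 0 < a) (hb : 0 < b) :
    |psiEps ε H a - psiEps ε H b| ≤ alphaEps ε / 3 * |a - b| := by
  have hα := alphaEps_nonneg hε0.le hε1
  have hsε : 0 < Real.sqrt ε := Real.sqrt_pos.mpr hε0
  have habs : |(∫ u in Ioi (0:ℝ), u^2 / Real.sqrt (a^2+ε*u^2) * H (u^2) * u^2)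
      - ∫ u in Ioi (0:ℝ), u^2 / Real.sqrt (b^2+ε*u^2) * H (u^2) * u^2|
      ≤ (|a-b|/ε) / (4*π) := by
    refine setInt_abs_le hH (integrable_psi_int hH hε0.le ha)
      (integrable_psi_int hH hε0.le hb) fun u hu => ?_
    have hHnn := hH.nonneg (u^2) (sq_nonneg u)
    have hd := sqrt_sq_add_diff ha.le hb.le (mul_nonneg hε0.le (sq_nonneg u))
    have hdenA : Real.sqrt ε * u ≤ Real.sqrt (a^2+ε*u^2) := by
      rw [show Real.sqrt ε * u = Real.sqrt (ε * u^2) by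
        rw [Real.sqrt_mul hε0.le, Real.sqrt_sq hu.le]]
      exact Real.sqrt_le_sqrt (by nlinarith [sq_nonneg a])
    have hdenB : Real.sqrt ε * u ≤ Real.sqrt (b^2+ε*u^2) := by
      rw [show Real.sqrt ε * u = Real.sqrt (ε * u^2) by
        rw [Real.sqrt_mul hε0.le, Real.sqrt_sq hu.le]]
      exact Real.sqrt_le_sqrt (by nlinarith [sq_nonneg b])
    have hA0 : 0 < Real.sqrt (a^2+ε*u^2) := lt_of_lt_of_le (by positivity) hdenA
    have hB0 : 0 < Real.sqrt (b^2+ε*u^2) := lt_of_lt_of_le (by positivity) hdenB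
    have hk : |u^2 / Real.sqrt (a^2+ε*u^2) - u^2 / Real.sqrt (b^2+ε*u^2)| ≤ |a-b|/ε := by
      rw [div_sub_div _ _ hA0.ne' hB0.ne', abs_div]
      have hnum : |u^2 * Real.sqrt (b^2+ε*u^2) - Real.sqrt (a^2+ε*u^2) * u^2|
          ≤ u^2 * |a-b| := by
        rw [show u^2 * Real.sqrt (b^2+ε*u^2) - Real.sqrt (a^2+ε*u^2) * u^2
            = u^2 * (Real.sqrt (b^2+ε*u^2) - Real.sqrt (a^2+ε*u^2)) by ring,
          abs_mul, abs_of_nonneg (sq_nonneg u)]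
        exact mul_le_mul_of_nonneg_left (by rwa [abs_sub_comm] at hd) (sq_nonneg u)
      have hden : ε * u^2 ≤ |Real.sqrt (a^2+ε*u^2) * Real.sqrt (b^2+ε*u^2)| := by
        rw [abs_of_pos (mul_pos hA0 hB0)]
        calc ε * u^2 = (Real.sqrt ε * u) * (Real.sqrt ε * u) := by
              have := Real.mul_self_sqrt hε0.le; nlinarith
          _ ≤ Real.sqrt (a^2+ε*u^2) * Real.sqrt (b^2+ε*u^2) :=
              mul_le_mul hdenA hdenB (by positivity) (by positivity)
      calc |u^2 * Real.sqrt (b^2+ε*u^2) - Real.sqrt (a^2+ε*u^2) * u^2|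
            / |Real.sqrt (a^2+ε*u^2) * Real.sqrt (b^2+ε*u^2)|
          ≤ (u^2 * |a-b|) / (ε * u^2) :=
            div_le_div₀ (by positivity) hnum (by positivity) hden
        _ = |a-b|/ε := by field_simp [hu.ne']
    have heq : u^2 / Real.sqrt (a^2+ε*u^2) * H (u^2) * u^2
        - u^2 / Real.sqrt (b^2+ε*u^2) * H (u^2) * u^2
        = (u^2 / Real.sqrt (a^2+ε*u^2) - u^2 / Real.sqrt (b^2+ε*u^2)) * (H (u^2) * u^2) := by
      ring
    rw [heq, abs_mul, abs_of_nonneg (mul_nonneg hHnn (sq_nonneg u))]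
    calc |u^2 / Real.sqrt (a^2+ε*u^2) - u^2 / Real.sqrt (b^2+ε*u^2)| * (H (u^2) * u^2)
        ≤ (|a-b|/ε) * (H (u^2) * u^2) :=
          mul_le_mul_of_nonneg_right hk (mul_nonneg hHnn (sq_nonneg u))
      _ = (|a-b|/ε) * H (u^2) * u^2 := (mul_assoc _ _ _).symm
  set Ia := ∫ u in Ioi (0:ℝ), u^2 / Real.sqrt (a^2+ε*u^2) * H (u^2) * u^2 with hIa
  set Ib := ∫ u in Ioi (0:ℝ), u^2 / Real.sqrt (b^2+ε*u^2) * H (u^2) * u^2 with hIb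
  have hpsi : psiEps ε H a - psiEps ε H b = 4*π/3*alphaEps ε*ε * (Ia - Ib) := by
    unfold psiEps; rw [hIa, hIb]; ring
  rw [hpsi, abs_mul, abs_of_nonneg (by positivity : (0:ℝ) ≤ 4*π/3*alphaEps ε*ε)]
  calc 4*π/3*alphaEps ε*ε * |Ia - Ib| ≤ 4*π/3*alphaEps ε*ε * ((|a-b|/ε)/(4*π)) :=
        mul_le_mul_of_nonneg_left habs (by positivity)
    _ = alphaEps ε / 3 * |a-b| := by field_simp

end AuxLip

section AuxDeriv

lemma gammaD_pos {t : ℝ} (ht : t < 1) : 0 < gammaD t :=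
  Real.rpow_pos_of_pos (by linarith) _

lemma gammaD_zero : gammaD 0 = 1 := by
  unfold gammaD; norm_num

lemma gammaD_le_one {t : ℝ} (h0 : 0 ≤ t) (h1 : t ≤ 1) : gammaD t ≤ 1 :=
  Real.rpow_le_one (by linarith) (by linarith) (by norm_num)

lemma gammaD_mono {s t : ℝ} (hst : s ≤ t) (ht : t ≤ 1) : gammaD t ≤ gammaD s :=
  Real.rpow_le_rpow (by linarith) (by linarith) (by norm_num)

lemma hasDerivAt_gammaD {t : ℝ} (ht : t < 1) :
    HasDerivAt gammaD (-(sigmaD t * gammaD t)) t := by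
  have h0 : (0:ℝ) < 1 - t := by linarith
  have h1 : HasDerivAt (fun x : ℝ => 1 - x) (-1) t := (hasDerivAt_id t).const_sub 1
  have h2 := h1.rpow_const (p := (2:ℝ)/3) (Or.inl h0.ne')
  have h3 : -1 * ((2:ℝ)/3) * (1 - t) ^ ((2:ℝ)/3 - 1) = -(sigmaD t * gammaD t) := by
    rw [show (2:ℝ)/3 - 1 = -1 + (2:ℝ)/3 by norm_num, Real.rpow_add h0, Real.rpow_neg_one]
    unfold sigmaD gammaD
    field_simp
  rw [← h3]
  exact h2

lemma hasDerivAt_sigmaD {t : ℝ} (ht : t < 1) :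
    HasDerivAt sigmaD (2/3 / (1 - t)^2) t := by
  have h0 : (1:ℝ) - t ≠ 0 := by intro h; linarith
  have h1 : HasDerivAt (fun x : ℝ => 1 - x) (-1) t := (hasDerivAt_id t).const_sub 1
  have h2 := (hasDerivAt_const t ((2:ℝ)/3)).div h1 h0
  have h3 : (0 * (1 - t) - 2/3 * (-1)) / (1 - t)^2 = 2/3 / (1 - t)^2 := by ring
  rw [← h3]
  exact h2

end AuxDeriv

section KeyComparison

open Topology

set_option maxHeartbeats 1000000 in
lemma key_comparison
    {T ε : ℝ} (hT0 : 0 < T) (hT1 : T < 1) (hε0 : 0 < ε) (hε1 : ε ≤ 1)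
    (hsmall : 4 * ε ^ ((3:ℝ)/10) ≤ (1 - T) ^ ((2:ℝ)/3))
    {H : ℝ → ℝ} (hH : HProps H) {γ p q : ℝ → ℝ}
    (hγd : ∀ t ∈ Icc (0:ℝ) T, HasDerivWithinAt γ (p t) (Icc 0 T) t)
    (hpd : ∀ t ∈ Icc (0:ℝ) T, HasDerivWithinAt p (q t) (Icc 0 T) t)
    (hq0 : ∀ t ∈ Icc (0:ℝ) T, q t ≤ 0)
    (hagree : ∀ t ∈ Icc (0:ℝ) T, gammaD t ≤ γ t → γ t ≤ 1 →
      q t = -(4 * π / 3) * (phiEps ε H (γ t) + 3 * psiEps ε H (γ t)) / (γ t) ^ 3)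
    (hγ0 : γ 0 = 1) (hp0a : -(2/3 : ℝ) < p 0) (hp0b : p 0 ≤ 0) :
    (∀ t ∈ Icc (0:ℝ) T, 0 < p t + sigmaD t * γ t) ∧
    (∀ t ∈ Icc (0:ℝ) T, gammaD t ≤ γ t ∧ γ t ≤ 1) ∧
    (∀ t ∈ Ioc (0:ℝ) T, gammaD t < γ t) := by
  have h0I : (0:ℝ) ∈ Icc (0:ℝ) T := ⟨le_refl 0, hT0.le⟩
  have hlt1 : ∀ t ∈ Icc (0:ℝ) T, t < 1 := fun t ht => lt_of_le_of_lt ht.2 hT1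
  -- continuity
  have contγ : ContinuousOn γ (Icc (0:ℝ) T) := fun t ht => (hγd t ht).continuousWithinAt
  have contp : ContinuousOn p (Icc (0:ℝ) T) := fun t ht => (hpd t ht).continuousWithinAt
  have contσ : ContinuousOn sigmaD (Icc (0:ℝ) T) := by
    have : ContinuousOn (fun t : ℝ => (2:ℝ)/3 / (1 - t)) (Icc (0:ℝ) T) :=
      ContinuousOn.div continuousOn_const (by fun_prop)
        (fun t ht => by have := hlt1 t ht; intro h; linarith)
    exact this
  set u : ℝ → ℝ := fun t => p t + sigmaD t * γ t with hu
  have contu : ContinuousOn u (Icc (0:ℝ) T) := contp.add (contσ.mul contγ)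
  have hσ0 : sigmaD 0 = 2/3 := by unfold sigmaD; norm_num
  have hu0 : 0 < u 0 := by
    show 0 < p 0 + sigmaD 0 * γ 0
    rw [hσ0, hγ0]; linarith
  -- derivative of u within I
  have hud : ∀ t ∈ Icc (0:ℝ) T, HasDerivWithinAt u
      (q t + (2/3/(1 - t)^2 * γ t + sigmaD t * p t)) (Icc (0:ℝ) T) t := by
    intro t ht
    exact (hpd t ht).add
      (((hasDerivAt_sigmaD (hlt1 t ht)).hasDerivWithinAt).mul (hγd t ht))
  -- interior conversion
  have hAt : ∀ {f f' : ℝ → ℝ}, (∀ t ∈ Icc (0:ℝ) T, HasDerivWithinAt f (f' t) (Icc (0:ℝ) T) t) →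
      ∀ t ∈ Ioo (0:ℝ) T, HasDerivAt f (f' t) t := fun h t ht =>
    (h t (Ioo_subset_Icc_self ht)).hasDerivAt (Icc_mem_nhds ht.1 ht.2)
  -- p and γ are antitone
  have pant : AntitoneOn p (Icc (0:ℝ) T) := by
    refine antitoneOn_of_deriv_nonpos (convex_Icc 0 T) contp (fun t ht => ?_) (fun t ht => ?_)
    · rw [interior_Icc] at ht
      exact ((hAt hpd) t ht).differentiableAt.differentiableWithinAt
    · rw [interior_Icc] at ht
      rw [((hAt hpd) t ht).deriv]
      exact hq0 t (Ioo_subset_Icc_self ht)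
  have hple : ∀ t ∈ Icc (0:ℝ) T, p t ≤ 0 := fun t ht => (pant h0I ht ht.1).trans hp0b
  have γant : AntitoneOn γ (Icc (0:ℝ) T) := by
    refine antitoneOn_of_deriv_nonpos (convex_Icc 0 T) contγ (fun t ht => ?_) (fun t ht => ?_)
    · rw [interior_Icc] at ht
      exact ((hAt hγd) t ht).differentiableAt.differentiableWithinAt
    · rw [interior_Icc] at ht
      rw [((hAt hγd) t ht).deriv]
      exact hple t (Ioo_subset_Icc_self ht)
  have hγle1 : ∀ t ∈ Icc (0:ℝ) T, γ t ≤ 1 := fun t ht => by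
    have := γant h0I ht ht.1; rw [hγ0] at this; exact this
  -- the auxiliary function w = γ / gammaD
  set w : ℝ → ℝ := fun r => γ r * (gammaD r)⁻¹ with hw
  have contgD : ContinuousOn gammaD (Icc (0:ℝ) T) := by
    have : ContinuousOn (fun r : ℝ => (1 - r) ^ ((2:ℝ)/3)) (Icc (0:ℝ) T) :=
      ContinuousOn.rpow_const (by fun_prop) (fun r _ => Or.inr (by norm_num))
    exact this
  have contw : ContinuousOn w (Icc (0:ℝ) T) :=
    contγ.mul (contgD.inv₀ fun r hr => (gammaD_pos (hlt1 r hr)).ne')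
  have hw0 : w 0 = 1 := by
    show γ 0 * (gammaD 0)⁻¹ = 1
    rw [hγ0, gammaD_zero]; norm_num
  have hwderiv : ∀ r ∈ Ioo (0:ℝ) T, HasDerivAt w (u r / gammaD r) r := by
    intro r hr
    have hr1 : r < 1 := lt_trans hr.2 hT1
    have hg0 : 0 < gammaD r := gammaD_pos hr1
    have hginv : HasDerivAt (fun x => (gammaD x)⁻¹)
        (-(-(sigmaD r * gammaD r)) / gammaD r ^ 2) r :=
      (hasDerivAt_gammaD hr1).inv hg0.ne'
    have hmul := ((hAt hγd) r hr).mul hginv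
    have heq : p r * (gammaD r)⁻¹ + γ r * (-(-(sigmaD r * gammaD r)) / gammaD r ^ 2)
        = u r / gammaD r := by
      show _ = (p r + sigmaD r * γ r) / gammaD r
      field_simp
    rw [← heq]
    exact hmul
  -- monotonicity tool
  have wlemma : ∀ t' ∈ Icc (0:ℝ) T, (∀ s ∈ Icc (0:ℝ) t', 0 ≤ u s) →
      ∀ s ∈ Icc (0:ℝ) t', gammaD s ≤ γ s := by
    intro t' ht' hu' s hs
    have hsub : Icc (0:ℝ) t' ⊆ Icc (0:ℝ) T := Icc_subset_Icc le_rfl ht'.2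
    have hmono : MonotoneOn w (Icc 0 t') := by
      refine monotoneOn_of_deriv_nonneg (convex_Icc 0 t') (contw.mono hsub)
        (fun r hr => ?_) (fun r hr => ?_)
      · rw [interior_Icc] at hr
        exact (hwderiv r ⟨hr.1, lt_of_lt_of_le hr.2 ht'.2⟩).differentiableAt.differentiableWithinAt
      · rw [interior_Icc] at hr
        have hrI : r ∈ Ioo (0:ℝ) T := ⟨hr.1, lt_of_lt_of_le hr.2 ht'.2⟩
        rw [(hwderiv r hrI).deriv]
        exact div_nonneg (hu' r ⟨hr.1.le, hr.2.le⟩) (gammaD_pos (lt_trans hrI.2 hT1)).le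
    have h0t' : (0:ℝ) ∈ Icc (0:ℝ) t' := ⟨le_rfl, hs.1.trans hs.2⟩
    have hws := hmono h0t' hs hs.1
    rw [hw0] at hws
    have hgd0 : 0 < gammaD s := gammaD_pos (lt_of_le_of_lt (hs.2.trans ht'.2) hT1)
    have : (1:ℝ) ≤ γ s / gammaD s := by rwa [div_eq_mul_inv]
    exact (one_le_div hgd0).mp this
  -- Claim A : u > 0 on I
  have claimA : ∀ t ∈ Icc (0:ℝ) T, 0 < u t := by
    by_contra hcon
    push_neg at hcon
    obtain ⟨tb, htbI, htb⟩ := hcon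
    set B : Set ℝ := {t ∈ Icc (0:ℝ) T | u t ≤ 0} with hB
    have hBne : B.Nonempty := ⟨tb, htbI, htb⟩
    have hBbdd : BddBelow B := ⟨0, fun x hx => hx.1.1⟩
    have hBclosed : IsClosed B := by
      have hBeq : B = Icc (0:ℝ) T ∩ u ⁻¹' (Iic 0) := rfl
      rw [hBeq]
      exact contu.preimage_isClosed_of_isClosed isClosed_Icc isClosed_Iic
    set t₁ := sInf B with ht₁def
    have ht₁B : t₁ ∈ B := hBclosed.csInf_mem hBne hBbdd
    have ht₁I : t₁ ∈ Icc (0:ℝ) T := ht₁B.1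
    have ht₁u : u t₁ ≤ 0 := ht₁B.2
    have ht₁pos : 0 < t₁ := by
      rcases eq_or_lt_of_le ht₁I.1 with h | h
      · exfalso; rw [← h] at ht₁u; linarith
      · exact h
    have hbefore : ∀ s, 0 ≤ s → s < t₁ → 0 < u s := by
      intro s hs0 hst
      by_contra hsu
      push_neg at hsu
      exact absurd (csInf_le hBbdd ⟨⟨hs0, hst.le.trans ht₁I.2⟩, hsu⟩) (not_le.mpr hst)
    have hnb : (𝓝[Ico (0:ℝ) t₁] t₁).NeBot := by
      refine mem_closure_iff_nhdsWithin_neBot.mp ?_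
      rw [closure_Ico ht₁pos.ne]
      exact ⟨ht₁pos.le, le_rfl⟩
    have hut₁0 : 0 ≤ u t₁ := by
      have htend : Filter.Tendsto u (𝓝[Ico (0:ℝ) t₁] t₁) (𝓝 (u t₁)) :=
        (contu t₁ ht₁I).mono (fun s hs => ⟨hs.1, hs.2.le.trans ht₁I.2⟩)
      exact ge_of_tendsto htend
        (eventually_nhdsWithin_of_forall fun s hs => (hbefore s hs.1 hs.2).le)
    have hut₁ : u t₁ = 0 := le_antisymm ht₁u hut₁0
    have hunn : ∀ s ∈ Icc (0:ℝ) t₁, 0 ≤ u s := by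
      intro s hs
      rcases lt_or_eq_of_le hs.2 with h | h
      · exact (hbefore s hs.1 h).le
      · rw [h, hut₁]
    have hγt₁ : gammaD t₁ ≤ γ t₁ := wlemma t₁ ht₁I hunn t₁ ⟨ht₁pos.le, le_rfl⟩
    have hq₁ := hagree t₁ ht₁I hγt₁ (hγle1 t₁ ht₁I)
    -- the derivative of u at t₁ is nonpositive
    set V := q t₁ + (2/3/(1 - t₁)^2 * γ t₁ + sigmaD t₁ * p t₁) with hV
    have hVle : V ≤ 0 := by
      have hderiv := (hud t₁ ht₁I).mono (Icc_subset_Icc le_rfl ht₁I.2)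
      rw [hasDerivWithinAt_iff_tendsto_slope] at hderiv
      have hset : Icc (0:ℝ) t₁ \ {t₁} = Ico 0 t₁ := by
        ext x
        simp only [mem_diff, mem_Icc, mem_Ico, mem_singleton_iff]
        constructor
        · rintro ⟨⟨h1, h2⟩, h3⟩; exact ⟨h1, lt_of_le_of_ne h2 h3⟩
        · rintro ⟨h1, h2⟩; exact ⟨⟨h1, h2.le⟩, h2.ne⟩
      rw [hset] at hderiv
      haveI := hnb
      refine le_of_tendsto hderiv (eventually_nhdsWithin_of_forall fun s hs => ?_)
      show slope u t₁ s ≤ 0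
      rw [slope_def_field]
      apply div_nonpos_of_nonneg_of_nonpos
      · rw [hut₁, sub_zero]; exact (hunn s ⟨hs.1, hs.2.le⟩)
      · linarith [hs.2]
    -- but the derivative of u at t₁ is positive : contradiction
    have hput : p t₁ = -(sigmaD t₁ * γ t₁) := by
      have : u t₁ = p t₁ + sigmaD t₁ * γ t₁ := rfl
      rw [hut₁] at this; linarith
    have hd0 : (0:ℝ) < 1 - t₁ := by linarith [hlt1 t₁ ht₁I]
    have hGlb : (1 - t₁) ^ ((2:ℝ)/3) ≤ γ t₁ := hγt₁
    have hG0 : 0 < γ t₁ := lt_of_lt_of_le (Real.rpow_pos_of_pos hd0 _) hGlb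
    have hG3 : (1 - t₁)^2 ≤ (γ t₁)^3 := by
      have h1 : ((1 - t₁) ^ ((2:ℝ)/3)) ^ (3:ℕ) = (1 - t₁) ^ (2:ℕ) := by
        rw [← Real.rpow_natCast ((1 - t₁) ^ ((2:ℝ)/3)) 3, ← Real.rpow_mul hd0.le,
          ← Real.rpow_natCast (1 - t₁) 2]
        norm_num
      calc (1 - t₁)^2 = ((1 - t₁) ^ ((2:ℝ)/3))^(3:ℕ) := h1.symm
        _ ≤ (γ t₁)^3 := pow_le_pow_left₀ (Real.rpow_nonneg hd0.le _) hGlb 3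
    have hsε : 0 < Real.sqrt ε := Real.sqrt_pos.mpr hε0
    have he0 : 0 ≤ ε ^ ((1:ℝ)/5) := Real.rpow_nonneg hε0.le _
    have he1 : ε ^ ((1:ℝ)/5) ≤ 1 := Real.rpow_le_one hε0.le hε1 (by norm_num)
    have heG : 4 * Real.sqrt ε ≤ ε ^ ((1:ℝ)/5) * γ t₁ := by
      have h1 : 4 * ε ^ ((3:ℝ)/10) ≤ γ t₁ := by
        calc 4 * ε ^ ((3:ℝ)/10) ≤ (1-T) ^ ((2:ℝ)/3) := hsmall
          _ ≤ (1 - t₁) ^ ((2:ℝ)/3) :=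
            Real.rpow_le_rpow (by linarith) (by linarith [ht₁I.2]) (by norm_num)
          _ ≤ γ t₁ := hGlb
      calc 4 * Real.sqrt ε = ε ^ ((1:ℝ)/5) * (4 * ε ^ ((3:ℝ)/10)) := by
            rw [show Real.sqrt ε = ε ^ ((1:ℝ)/2) from Real.sqrt_eq_rpow ε,
              show ε ^ ((1:ℝ)/5) * (4 * ε ^ ((3:ℝ)/10))
                = 4 * (ε ^ ((1:ℝ)/5) * ε ^ ((3:ℝ)/10)) by ring,
              ← Real.rpow_add hε0]
            norm_num
        _ ≤ ε ^ ((1:ℝ)/5) * γ t₁ := mul_le_mul_of_nonneg_left h1 he0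
    have hS := S_le hH hε0 hε1 hG0
    -- lower bound for q t₁
    have h4 : -((2:ℝ)/9 * ((1 - ε^((1:ℝ)/5)) * (γ t₁ + 2*Real.sqrt ε) / (γ t₁)^3)) ≤ q t₁ := by
      rw [hq₁]
      have h5 : (4*π/3) * (phiEps ε H (γ t₁) + 3*psiEps ε H (γ t₁))
          ≤ 2/9 * ((1 - ε^((1:ℝ)/5)) * (γ t₁ + 2*Real.sqrt ε)) := by
        calc (4*π/3) * (phiEps ε H (γ t₁) + 3*psiEps ε H (γ t₁))
            ≤ (4*π/3) * (alphaEps ε * (γ t₁ + 2*Real.sqrt ε)) :=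
              mul_le_mul_of_nonneg_left hS (by positivity)
          _ = 2/9 * ((1 - ε^((1:ℝ)/5)) * (γ t₁ + 2*Real.sqrt ε)) := by
              unfold alphaEps; field_simp; ring
      rw [show -(4*π/3) * (phiEps ε H (γ t₁) + 3*psiEps ε H (γ t₁)) / (γ t₁)^3
          = -((4*π/3) * (phiEps ε H (γ t₁) + 3*psiEps ε H (γ t₁)) / (γ t₁)^3) by ring]
      apply neg_le_neg
      calc (4*π/3) * (phiEps ε H (γ t₁) + 3*psiEps ε H (γ t₁)) / (γ t₁)^3
          ≤ (2/9 * ((1 - ε^((1:ℝ)/5)) * (γ t₁ + 2*Real.sqrt ε))) / (γ t₁)^3 := by gcongr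
        _ = 2/9 * ((1 - ε^((1:ℝ)/5)) * (γ t₁ + 2*Real.sqrt ε) / (γ t₁)^3) := by ring
    have hcross : (1 - ε^((1:ℝ)/5)) * (γ t₁ + 2*Real.sqrt ε) / (γ t₁)^3
        < γ t₁ / (1 - t₁)^2 := by
      rw [div_lt_div_iff₀ (by positivity) (by positivity)]
      have h6 : (1 - ε^((1:ℝ)/5)) * (γ t₁ + 2*Real.sqrt ε) < γ t₁ := by
        nlinarith [mul_nonneg (sub_nonneg.mpr he1) hsε.le]
      calc (1 - ε^((1:ℝ)/5)) * (γ t₁ + 2*Real.sqrt ε) * (1 - t₁)^2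
          < γ t₁ * (1 - t₁)^2 := mul_lt_mul_of_pos_right h6 (pow_pos hd0 2)
        _ ≤ γ t₁ * (γ t₁)^3 := mul_le_mul_of_nonneg_left hG3 hG0.le
    have hAfin : 2/9 * ((1 - ε^((1:ℝ)/5)) * (γ t₁ + 2*Real.sqrt ε) / (γ t₁)^3)
        < 2/9 * (γ t₁ / (1 - t₁)^2) := by
      have : (0:ℝ) < 2/9 := by norm_num
      exact mul_lt_mul_of_pos_left hcross this
    have hVeq : V = q t₁ + 2/9 * (γ t₁ / (1 - t₁)^2) := by
      rw [hV, hput]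
      simp only [sigmaD]
      field_simp [hd0.ne']
      ring
    have hVpos : 0 < V := by
      rw [hVeq]; linarith
    linarith
  refine ⟨claimA, fun t ht => ⟨wlemma T ⟨hT0.le, le_rfl⟩
    (fun s hs => (claimA s hs).le) t ht, hγle1 t ht⟩, ?_⟩
  -- strict inequality on (0,T]
  have hwstrict : StrictMonoOn w (Icc (0:ℝ) T) := by
    refine strictMonoOn_of_deriv_pos (convex_Icc 0 T) contw (fun r hr => ?_)
    rw [interior_Icc] at hr
    rw [(hwderiv r hr).deriv]
    exact div_pos (claimA r (Ioo_subset_Icc_self hr)) (gammaD_pos (lt_trans hr.2 hT1))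
  intro t ht
  have hlt := hwstrict h0I ⟨ht.1.le, ht.2⟩ ht.1
  rw [hw0] at hlt
  have hgd0 : 0 < gammaD t := gammaD_pos (lt_of_le_of_lt ht.2 hT1)
  have h1 : (1:ℝ) < γ t / gammaD t := by rwa [div_eq_mul_inv]
  exact (one_lt_div hgd0).mp h1

end KeyComparison

section Existence

open Topology

lemma p0_bounds {H : ℝ → ℝ} {ε : ℝ} (hH : HProps H) (hε0 : 0 < ε) (hε1 : ε ≤ 1) :
    -(2/3 : ℝ) < -Real.sqrt (8 * π / 3 * phiEps ε H 1) ∧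
      -Real.sqrt (8 * π / 3 * phiEps ε H 1) ≤ 0 := by
  refine ⟨?_, neg_nonpos.mpr (Real.sqrt_nonneg _)⟩
  rw [neg_lt_neg_iff]
  have h1 := phiEps_le hH hε0 hε1 (zero_le_one' ℝ)
  have hsle : Real.sqrt ε ≤ ε ^ ((1:ℝ)/5) := by
    rw [Real.sqrt_eq_rpow]
    exact Real.rpow_le_rpow_of_exponent_ge hε0 hε1 (by norm_num)
  have hs0 : 0 < Real.sqrt ε := Real.sqrt_pos.mpr hε0
  have hφ : phiEps ε H 1 < 1/(6*π) := by
    have h2 : (1 - ε ^ ((1:ℝ)/5)) * (1 + Real.sqrt ε) < 1 := by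
      nlinarith [mul_pos (lt_of_lt_of_le hs0 hsle) hs0]
    have h3 : alphaEps ε * (1 + Real.sqrt ε) < 1/(6*π) := by
      unfold alphaEps
      rw [div_mul_eq_mul_div, div_lt_div_iff₀ (by positivity) (by positivity)]
      nlinarith [mul_lt_mul_of_pos_right h2 (by positivity : (0:ℝ) < 6*π), pi_pos]
    linarith
  refine (Real.sqrt_lt' (by norm_num)).mpr ?_
  have h4 : 8*π/3 * (1/(6*π)) = 4/9 := by field_simp; ring
  calc 8*π/3 * phiEps ε H 1 < 8*π/3 * (1/(6*π)) :=
        mul_lt_mul_of_pos_left hφ (by positivity)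
    _ = (2/3)^2 := by rw [h4]; norm_num

set_option maxHeartbeats 1600000 in
lemma gammaV_exists
    {T ε : ℝ} (hT0 : 0 < T) (hT1 : T < 1) (hε0 : 0 < ε) (hε1 : ε ≤ 1)
    (hsmall : 4 * ε ^ ((3:ℝ)/10) ≤ (1 - T) ^ ((2:ℝ)/3))
    {H : ℝ → ℝ} (hH : HProps H) :
    ∃ γ γ' : ℝ → ℝ, GammaVSol ε H (Icc 0 T) γ γ' := by
  obtain ⟨hp0a, hp0b⟩ := p0_bounds hH hε0 hε1
  set p0 : ℝ := -Real.sqrt (8 * π / 3 * phiEps ε H 1) with hp0def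
  set m : ℝ := gammaD T with hmdef
  have hm0 : 0 < m := gammaD_pos hT1
  have hm1 : m ≤ 1 := gammaD_le_one hT0.le hT1.le
  have hπ := pi_pos
  have hα0 := alphaEps_nonneg hε0.le hε1
  have hαle := alphaEps_le hε0.le
  have hsε1 : Real.sqrt ε ≤ 1 := by
    calc Real.sqrt ε ≤ Real.sqrt 1 := Real.sqrt_le_sqrt hε1
      _ = 1 := Real.sqrt_one
  set cl : ℝ → ℝ := fun x => max (min x 1) m with hcl
  have hclmem : ∀ x : ℝ, m ≤ cl x ∧ cl x ≤ 1 := fun x =>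
    ⟨le_max_right _ _, max_le (min_le_right x 1) hm1⟩
  have hcl0 : ∀ x : ℝ, 0 < cl x := fun x => lt_of_lt_of_le hm0 (hclmem x).1
  have hcl_eq : ∀ x : ℝ, m ≤ x → x ≤ 1 → cl x = x := fun x h1 h2 => by
    show max (min x 1) m = x
    rw [min_eq_left h2, max_eq_left h1]
  have hcl_lip : ∀ x y : ℝ, |cl x - cl y| ≤ |x - y| := by
    intro x y
    have h1 : |max (min x 1) m - max (min y 1) m| ≤ |min x 1 - min y 1| :=
      abs_max_sub_max_le_abs _ _ _
    have h2 : |min x 1 - min y 1| ≤ max |x - y| |(1:ℝ) - 1| := abs_min_sub_min_le_max _ _ _ _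
    have h3 : max |x - y| |(1:ℝ) - 1| = |x - y| := by
      rw [sub_self, abs_zero]
      exact max_eq_left (abs_nonneg _)
    rw [h3] at h2
    exact h1.trans h2
  -- the truncated right-hand side
  set g : ℝ → ℝ :=
    fun x => -(4*π/3) * (phiEps ε H (cl x) + 3*psiEps ε H (cl x)) / (cl x)^3 with hg
  have hS_nn : ∀ x : ℝ, 0 ≤ phiEps ε H (cl x) + 3*psiEps ε H (cl x) :=
    fun x => S_nonneg hH hε0.le hε1 _
  have hS_ub : ∀ x : ℝ, phiEps ε H (cl x) + 3*psiEps ε H (cl x) ≤ 1/(2*π) := by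
    intro x
    calc phiEps ε H (cl x) + 3*psiEps ε H (cl x)
        ≤ alphaEps ε * (cl x + 2*Real.sqrt ε) := S_le hH hε0 hε1 (hcl0 x)
      _ ≤ (1/(6*π)) * 3 := by
          apply mul_le_mul hαle (by linarith [(hclmem x).2]) ?_ (by positivity)
          have := Real.sqrt_nonneg ε
          linarith [(hcl0 x)]
      _ = 1/(2*π) := by field_simp; ring
  have hg_nonpos : ∀ x : ℝ, g x ≤ 0 := by
    intro x
    apply div_nonpos_of_nonpos_of_nonneg
    · rw [neg_mul]
      exact neg_nonpos.mpr (mul_nonneg (by positivity) (hS_nn x))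
    · exact pow_nonneg (hcl0 x).le 3
  have hg_bound : ∀ x : ℝ, |g x| ≤ 2/m^3 := by
    intro x
    rw [abs_of_nonpos (hg_nonpos x)]
    have heq : -(g x) = (4*π/3) * (phiEps ε H (cl x) + 3*psiEps ε H (cl x)) / (cl x)^3 := by
      simp only [hg]; ring
    rw [heq]
    have hnum : (4*π/3) * (phiEps ε H (cl x) + 3*psiEps ε H (cl x)) ≤ 2 := by
      calc (4*π/3) * (phiEps ε H (cl x) + 3*psiEps ε H (cl x))
          ≤ (4*π/3) * (1/(2*π)) := mul_le_mul_of_nonneg_left (hS_ub x) (by positivity)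
        _ = 2/3 := by field_simp; ring
        _ ≤ 2 := by norm_num
    exact div_le_div₀ (by norm_num) hnum (pow_pos hm0 3)
      (pow_le_pow_left₀ hm0.le (hclmem x).1 3)
  have hg_lip : ∀ x y : ℝ, |g x - g y| ≤ (4/(9*m^3) + 2/m^6) * |x - y| := by
    intro x y
    have ham := (hclmem x).1; have ha1 := (hclmem x).2; have ha0 := hcl0 x
    have hbm := (hclmem y).1; have hb1 := (hclmem y).2; have hb0 := hcl0 y
    have habxy := hcl_lip x y
    set a := cl x with haeq
    set b := cl y with hbeq
    set Sa := phiEps ε H a + 3*psiEps ε H a with hSa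
    set Sb := phiEps ε H b + 3*psiEps ε H b with hSb
    have hSab : |Sa - Sb| ≤ 2*alphaEps ε*|a - b| := by
      have hφl := phiEps_lip hH hε0 hε1 ha0.le hb0.le
      have hψl := psiEps_lip hH hε0 hε1 ha0 hb0
      have hd : Sa - Sb = (phiEps ε H a - phiEps ε H b) + 3*(psiEps ε H a - psiEps ε H b) := by
        rw [hSa, hSb]; ring
      rw [hd]
      calc |(phiEps ε H a - phiEps ε H b) + 3*(psiEps ε H a - psiEps ε H b)|
          ≤ |phiEps ε H a - phiEps ε H b| + |3*(psiEps ε H a - psiEps ε H b)| := abs_add_le _ _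
        _ = |phiEps ε H a - phiEps ε H b| + 3*|psiEps ε H a - psiEps ε H b| := by
            rw [abs_mul]; norm_num
        _ ≤ alphaEps ε * |a-b| + 3*(alphaEps ε / 3 * |a-b|) := by
            have := mul_le_mul_of_nonneg_left hψl (by norm_num : (0:ℝ) ≤ 3)
            linarith
        _ = 2*alphaEps ε*|a-b| := by ring
    have hinv : |1/a^3 - 1/b^3| ≤ 3*|a-b|/m^6 := by
      rw [div_sub_div _ _ (by positivity : a^3 ≠ 0) (by positivity : b^3 ≠ 0), abs_div]
      have hnum : |1*b^3 - a^3*1| ≤ 3*|a-b| := by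
        rw [show (1:ℝ)*b^3 - a^3*1 = (b-a)*(b^2+a*b+a^2) by ring, abs_mul]
        have hfac : |b^2+a*b+a^2| ≤ 3 := by
          rw [abs_of_nonneg (by positivity)]
          nlinarith
        calc |b-a| * |b^2+a*b+a^2| ≤ |b-a| * 3 :=
              mul_le_mul_of_nonneg_left hfac (abs_nonneg _)
          _ = 3*|a-b| := by rw [abs_sub_comm]; ring
      have hden : m^6 ≤ |a^3*b^3| := by
        rw [abs_of_pos (by positivity)]
        calc m^6 = m^3 * m^3 := by ring
          _ ≤ a^3 * b^3 := mul_le_mul (pow_le_pow_left₀ hm0.le ham 3)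
              (pow_le_pow_left₀ hm0.le hbm 3) (by positivity) (by positivity)
      exact div_le_div₀ (by positivity) hnum (by positivity) hden
    have hsplit : Sa/a^3 - Sb/b^3 = (Sa - Sb)*(1/a^3) + Sb*(1/a^3 - 1/b^3) := by
      field_simp
      ring
    have hSbub : Sb ≤ 1/(2*π) := hS_ub y
    have hSbnn : 0 ≤ Sb := hS_nn y
    have hinva : (1:ℝ)/a^3 ≤ 1/m^3 :=
      one_div_le_one_div_of_le (pow_pos hm0 3) (pow_le_pow_left₀ hm0.le ham 3)
    have e1 : |Sa - Sb| ≤ 2*alphaEps ε*|x-y| := by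
      refine hSab.trans ?_
      exact mul_le_mul_of_nonneg_left habxy (mul_nonneg (by norm_num) hα0)
    have e2 : |1/a^3 - 1/b^3| ≤ 3*|x-y|/m^6 := by
      refine hinv.trans ?_
      gcongr
    have hmain : |Sa/a^3 - Sb/b^3|
        ≤ (2*alphaEps ε*|x-y|) * (1/m^3) + (1/(2*π)) * (3*|x-y|/m^6) := by
      rw [hsplit]
      calc |(Sa - Sb)*(1/a^3) + Sb*(1/a^3 - 1/b^3)|
          ≤ |(Sa - Sb)*(1/a^3)| + |Sb*(1/a^3 - 1/b^3)| := abs_add_le _ _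
        _ = |Sa - Sb| * (1/a^3) + Sb * |1/a^3 - 1/b^3| := by
            rw [abs_mul, abs_mul, abs_of_nonneg (by positivity : (0:ℝ) ≤ 1/a^3),
              abs_of_nonneg hSbnn]
        _ ≤ (2*alphaEps ε*|x-y|) * (1/m^3) + (1/(2*π)) * (3*|x-y|/m^6) := by
            have t1 : |Sa - Sb| * (1/a^3) ≤ (2*alphaEps ε*|x-y|)*(1/m^3) :=
              mul_le_mul e1 hinva (by positivity) (by positivity)
            have t2 : Sb * |1/a^3 - 1/b^3| ≤ (1/(2*π))*(3*|x-y|/m^6) :=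
              mul_le_mul hSbub e2 (abs_nonneg _) (by positivity)
            linarith
    have hgxy : g x - g y = -(4*π/3) * (Sa/a^3 - Sb/b^3) := by
      simp only [hg]
      rw [← haeq, ← hbeq, ← hSa, ← hSb]
      ring
    rw [hgxy, abs_mul, abs_neg, abs_of_nonneg (by positivity : (0:ℝ) ≤ 4*π/3)]
    have hconst : 4*π/3*(2*alphaEps ε) ≤ 4/9 := by
      calc 4*π/3*(2*alphaEps ε) ≤ 4*π/3*(2*(1/(6*π))) := by
            apply mul_le_mul_of_nonneg_left (by linarith) (by positivity)
        _ = 4/9 := by field_simp; ring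
    calc 4*π/3 * |Sa/a^3 - Sb/b^3|
        ≤ 4*π/3 * ((2*alphaEps ε*|x-y|) * (1/m^3) + (1/(2*π)) * (3*|x-y|/m^6)) :=
          mul_le_mul_of_nonneg_left hmain (by positivity)
      _ = (4*π/3*(2*alphaEps ε)) * (|x-y|/m^3) + 2 * (|x-y|/m^6) := by
          field_simp
          ring
      _ ≤ (4/9) * (|x-y|/m^3) + 2 * (|x-y|/m^6) := by
          have h4 : 0 ≤ |x-y|/m^3 := by positivity
          have h5 := mul_le_mul_of_nonneg_right hconst h4
          linarith
      _ = (4/(9*m^3) + 2/m^6) * |x-y| := by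
          field_simp
  -- Picard-Lindelöf
  set R : ℝ := (2/3 + 2/m^3) * T / (1 - T) with hR
  have hR0 : 0 ≤ R :=
    div_nonneg (mul_nonneg (by positivity) hT0.le) (by linarith)
  set C : ℝ := 2/3 + 2/m^3 + R with hC
  set K : ℝ := 1 + (4/(9*m^3) + 2/m^6) with hK
  have hK0 : 0 ≤ K := by rw [hK]; positivity
  have hK1 : 1 ≤ K := by
    rw [hK]
    have h : (0:ℝ) ≤ 4/(9*m^3) + 2/m^6 := by positivity
    linarith
  have hKr : 0 ≤ 4/(9*m^3) + 2/m^6 := by positivity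
  have hKr' : 4/(9*m^3) + 2/m^6 ≤ K := by rw [hK]; linarith
  set v : ℝ → ℝ × ℝ → ℝ × ℝ := fun _ z => (z.2, g z.1) with hv
  have habs_p0 : |p0| ≤ 2/3 := abs_le.mpr ⟨by linarith, hp0b.trans (by norm_num)⟩
  have h0I' : (0:ℝ) ∈ Icc (0:ℝ) T := ⟨le_rfl, hT0.le⟩
  have hC0 : 0 ≤ C := by
    have : (0:ℝ) ≤ 2/m^3 := by positivity
    rw [hC]; linarith
  have hpl : IsPicardLindelof v (⟨0, h0I'⟩ : Icc (0:ℝ) T) ((1:ℝ), p0) R.toNNReal 0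
      C.toNNReal K.toNNReal := by
    refine ⟨?_, fun x _ => continuousOn_const, ?_, ?_⟩
    · intro t _
      refine LipschitzWith.lipschitzOnWith (LipschitzWith.of_dist_le_mul fun z w => ?_)
      rw [Real.coe_toNNReal _ hK0, Prod.dist_eq, Prod.dist_eq]
      simp only [hv, Real.dist_eq]
      have hM0 : 0 ≤ max |z.1 - w.1| |z.2 - w.2| :=
        le_trans (abs_nonneg _) (le_max_left _ _)
      have h1 : |z.2 - w.2| ≤ K * max |z.1 - w.1| |z.2 - w.2| := by
        have := le_max_right |z.1 - w.1| |z.2 - w.2|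
        nlinarith [mul_le_mul_of_nonneg_right hK1 hM0]
      have h2 : |g z.1 - g w.1| ≤ K * max |z.1 - w.1| |z.2 - w.2| := by
        have hgl := hg_lip z.1 w.1
        have hle : |z.1 - w.1| ≤ max |z.1 - w.1| |z.2 - w.2| := le_max_left _ _
        calc |g z.1 - g w.1| ≤ (4/(9*m^3) + 2/m^6) * |z.1 - w.1| := hgl
          _ ≤ K * max |z.1 - w.1| |z.2 - w.2| :=
            mul_le_mul hKr' hle (abs_nonneg _) (le_trans zero_le_one hK1)
      exact max_le h1 h2
    · intro t _ z hz
      have hzd : dist z ((1:ℝ), p0) ≤ R := by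
        have := Metric.mem_closedBall.mp hz
        rwa [Real.coe_toNNReal _ hR0] at this
      rw [Real.coe_toNNReal _ hC0]
      rw [Prod.dist_eq] at hzd
      have hz2 : |z.2 - p0| ≤ R := by
        rw [← Real.dist_eq]
        exact le_trans (le_max_right _ _) hzd
      have hz2' : |z.2| ≤ 2/3 + R := by
        have := abs_sub_abs_le_abs_sub z.2 p0
        linarith
      rw [Prod.norm_def]
      simp only [hv]
      have hg2 : 0 ≤ 2/m^3 := by positivity
      apply max_le
      · rw [Real.norm_eq_abs]
        calc |z.2| ≤ 2/3 + R := hz2'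
          _ ≤ C := by rw [hC]; linarith
      · rw [Real.norm_eq_abs]
        calc |g z.1| ≤ 2/m^3 := hg_bound z.1
          _ ≤ C := by rw [hC]; linarith
    · have hT' : (1:ℝ) - T ≠ 0 := by intro h; linarith
      have hCT : C * T = R := by
        rw [hC, hR]
        field_simp [hm0.ne', hT']
        ring
      have hsub : ((⟨0, h0I'⟩ : Icc (0:ℝ) T) : ℝ) = 0 := rfl
      simp only [hsub, Real.coe_toNNReal _ hC0, Real.coe_toNNReal _ hR0, NNReal.coe_zero,
        sub_zero, tsub_zero, max_eq_left hT0.le]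
      exact le_of_eq hCT
  obtain ⟨F, hF0', hFd⟩ := hpl.exists_eq_forall_mem_Icc_hasDerivWithinAt₀
  have hF0 : F 0 = ((1:ℝ), p0) := hF0'
  set γ : ℝ → ℝ := fun t => (F t).1 with hγdef
  set pp : ℝ → ℝ := fun t => (F t).2 with hppdef
  have hγd : ∀ t ∈ Icc (0:ℝ) T, HasDerivWithinAt γ (pp t) (Icc 0 T) t := by
    intro t ht
    have h := ((ContinuousLinearMap.fst ℝ ℝ ℝ).hasFDerivAt).comp_hasDerivWithinAt t (hFd t ht)
    simpa [hv, hγdef, hppdef, Function.comp_def] using h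
  have hpd : ∀ t ∈ Icc (0:ℝ) T, HasDerivWithinAt pp (g (γ t)) (Icc 0 T) t := by
    intro t ht
    have h := ((ContinuousLinearMap.snd ℝ ℝ ℝ).hasFDerivAt).comp_hasDerivWithinAt t (hFd t ht)
    simpa [hv, hγdef, hppdef, Function.comp_def] using h
  have hγ0 : γ 0 = 1 := by rw [hγdef]; simp [hF0]
  have hpp0 : pp 0 = p0 := by rw [hppdef]; simp [hF0]
  have hagree : ∀ t ∈ Icc (0:ℝ) T, gammaD t ≤ γ t → γ t ≤ 1 →
      g (γ t) = -(4*π/3) * (phiEps ε H (γ t) + 3*psiEps ε H (γ t)) / (γ t)^3 := by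
    intro t ht h1 h2
    have hmle : m ≤ γ t := le_trans (gammaD_mono ht.2 hT1.le) h1
    simp only [hg]
    rw [hcl_eq _ hmle h2]
  have hcomp := key_comparison hT0 hT1 hε0 hε1 hsmall hH hγd hpd
    (fun t _ => hg_nonpos (γ t)) hagree hγ0 (by rw [hpp0]; exact hp0a)
    (by rw [hpp0]; exact hp0b)
  refine ⟨γ, pp, fun t ht => ?_, fun t ht => ⟨hγd t ht, ?_⟩, hγ0, by rw [hpp0]⟩
  · exact lt_of_lt_of_le (gammaD_pos (lt_of_le_of_lt ht.2 hT1)) (hcomp.2.1 t ht).1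
  · have h := hpd t ht
    rwa [hagree t ht (hcomp.2.1 t ht).1 (hcomp.2.1 t ht).2] at h

end Existence

/-- for sufficiently small ε the homogeneous Vlasov scale function γ_{V,ε}
exists on [0,T] and satisfies γ_{V,ε} > γ_D and σ_{V,ε} < σ_D on (0,T]. -/
theorem gammaV_comparison_with_dust
    (T : ℝ) (hT0 : 0 < T) (hT1 : T < 1) (H : ℝ → ℝ) (hH : HProps H) :
    ∃ ε₀ : ℝ, 0 < ε₀ ∧ ∀ ε : ℝ, 0 < ε → ε ≤ ε₀ → ε ≤ 1 →
      (∃ γ γ' : ℝ → ℝ, GammaVSol ε H (Icc 0 T) γ γ') ∧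
      (∀ γ γ' : ℝ → ℝ, GammaVSol ε H (Icc 0 T) γ γ' →
        ∀ t ∈ Ioc (0:ℝ) T,
          gammaD t < γ t ∧ -(γ' t) / γ t < sigmaD t) := by
  have hx0 : (0:ℝ) < (1 - T) ^ ((2:ℝ)/3) := Real.rpow_pos_of_pos (by linarith) _
  refine ⟨min (1/2) (((1 - T) ^ ((2:ℝ)/3) / 4) ^ ((10:ℝ)/3)),
    lt_min (by norm_num) (Real.rpow_pos_of_pos (by positivity) _), ?_⟩
  intro ε hε0 hεle hε1
  have hsmall : 4 * ε ^ ((3:ℝ)/10) ≤ (1 - T) ^ ((2:ℝ)/3) := by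
    have h1 : ε ≤ ((1 - T) ^ ((2:ℝ)/3) / 4) ^ ((10:ℝ)/3) := le_trans hεle (min_le_right _ _)
    have h2 : ε ^ ((3:ℝ)/10) ≤ (((1 - T) ^ ((2:ℝ)/3) / 4) ^ ((10:ℝ)/3)) ^ ((3:ℝ)/10) :=
      Real.rpow_le_rpow hε0.le h1 (by norm_num)
    have h3 : (((1 - T) ^ ((2:ℝ)/3) / 4) ^ ((10:ℝ)/3)) ^ ((3:ℝ)/10)
        = (1 - T) ^ ((2:ℝ)/3) / 4 := by
      rw [← Real.rpow_mul (by positivity)]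
      norm_num
    rw [h3] at h2
    linarith
  refine ⟨gammaV_exists hT0 hT1 hε0 hε1 hsmall hH, ?_⟩
  rintro γ γ' ⟨hpos, hode, hγ0, hγ'0⟩ t ht
  obtain ⟨hp0a, hp0b⟩ := p0_bounds hH hε0 hε1
  have hcomp := key_comparison hT0 hT1 hε0 hε1 hsmall hH
    (fun s hs => (hode s hs).1) (fun s hs => (hode s hs).2)
    (fun s hs => by
      have h1 := S_nonneg hH hε0.le hε1 (γ s)
      have h2 : (0:ℝ) < (γ s)^3 := pow_pos (hpos s hs) 3
      apply div_nonpos_of_nonpos_of_nonneg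
      · rw [neg_mul]
        exact neg_nonpos.mpr (mul_nonneg (by positivity) h1)
      · exact h2.le)
    (fun s hs _ _ => rfl) hγ0
    (by rw [hγ'0]; exact hp0a) (by rw [hγ'0]; exact hp0b)
  have htI : t ∈ Icc (0:ℝ) T := ⟨ht.1.le, ht.2⟩
  refine ⟨hcomp.2.2 t ht, ?_⟩
  have hu := hcomp.1 t htI
  have hγpos := hpos t htI
  rw [div_lt_iff₀ hγpos]
  linarith

end EV
end
end
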